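/- arXiv:1404.3882 — 5 statements merged into one kernel-verified Lean document; each statement's English description precedes it below -/
import Mathlib

section
/- Let G = (V,E) be a finite simple graph, let W be a vertex cover of G, and let S be a minimal separator of G. Let (D_1, S, D_2) be a partition of V such that D_1 and D_2 are each a union of connected components of G − S, and such that D_1 and D_2 each contain a full component associated to S. Write D_1^W = D_1 ∩ W and D_2^W = D_2 ∩ W. Then S \ W = { x ∈ V \ W : N(x) intersects D_1^W and N(x) intersects D_2^W }. -/
open SimpleGraph

universe u

/-- Reachability in `G − S`: there is a walk whose support avoids `S`. -/
def AvoidReach {V : Type u} (G : SimpleGraph V) (S : Set V) (u v : V) : Prop :=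
  ∃ w : G.Walk u v, ∀ x ∈ w.support, x ∉ S

/-- `S` is a `u,v`-separator of `G`: `u, v ∉ S` and `u,v` lie in different
connected components of `G − S`. -/
def IsSep {V : Type u} (G : SimpleGraph V) (S : Set V) (u v : V) : Prop :=
  u ∉ S ∧ v ∉ S ∧ ¬ AvoidReach G S u v

/-- `S` is a minimal `u,v`-separator of `G`. -/
def IsMinSep {V : Type u} (G : SimpleGraph V) (S : Set V) (u v : V) : Prop :=
  IsSep G S u v ∧ ∀ T ⊂ S, ¬ IsSep G T u v

/-- `S` is a minimal separator of `G`. -/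
def IsMinimalSeparator {V : Type u} (G : SimpleGraph V) (S : Set V) : Prop :=
  ∃ u v, IsMinSep G S u v

/-- `C` is a connected component of `G − S`. -/
def IsCompOf {V : Type u} (G : SimpleGraph V) (S C : Set V) : Prop :=
  ∃ v, v ∉ S ∧ C = {x | AvoidReach G S v x}

/-- The neighbourhood of a vertex set `A`: vertices outside `A` with a neighbour in `A`. -/
def setNbhd {V : Type u} (G : SimpleGraph V) (A : Set V) : Set V :=
  {x | x ∉ A ∧ ∃ a ∈ A, G.Adj x a}

/-- `C` is a full component of `G − S` associated to `S`, i.e. `N(C) = S`. -/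
def IsFullCompOf {V : Type u} (G : SimpleGraph V) (S C : Set V) : Prop :=
  IsCompOf G S C ∧ setNbhd G C = S

/-- `W` is a vertex cover of `G`. -/
def IsVC {V : Type u} (G : SimpleGraph V) (W : Set V) : Prop :=
  ∀ ⦃a b⦄, G.Adj a b → a ∈ W ∨ b ∈ W

/-- The vertex cover number `vc(G)`. -/
noncomputable def vcNum {V : Type u} (G : SimpleGraph V) : ℕ :=
  sInf {n | ∃ W : Set V, IsVC G W ∧ W.ncard = n}

/-- A graph is chordal if every cycle on four or more vertices has a chord, i.e. an
edge of the graph between two vertices of the cycle that is not an edge of the cycle. -/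
def IsChordalG {V : Type u} (G : SimpleGraph V) : Prop :=
  ∀ (v : V) (w : G.Walk v v), w.IsCycle → 4 ≤ w.length →
    ∃ x ∈ w.support, ∃ y ∈ w.support, G.Adj x y ∧ s(x, y) ∉ w.edges

/-- `H` is a minimal triangulation of `G`: a chordal supergraph of `G` such that no graph
strictly between `G` and `H` is chordal. -/
def IsMinimalTriangulation {V : Type u} (G H : SimpleGraph V) : Prop :=
  G ≤ H ∧ IsChordalG H ∧ ∀ F : SimpleGraph V, G ≤ F → F < H → ¬ IsChordalG F

/-- `Ω` is a maximal clique of `H`. -/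
def IsMaxClique {V : Type u} (H : SimpleGraph V) (Ω : Set V) : Prop :=
  H.IsClique Ω ∧ ∀ t : Set V, H.IsClique t → Ω ⊆ t → t = Ω

/-- `Ω` is a potential maximal clique of `G`: a maximal clique of some
minimal triangulation of `G`. -/
def IsPMC {V : Type u} (G : SimpleGraph V) (Ω : Set V) : Prop :=
  ∃ H : SimpleGraph V, IsMinimalTriangulation G H ∧ IsMaxClique H Ω

theorem statement_0 {V : Type} [Fintype V] (G : SimpleGraph V) (W : Set V) (hW : IsVC G W)
    (S D1 D2 : Set V) (hS : IsMinimalSeparator G S)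
    (hcover : D1 ∪ S ∪ D2 = Set.univ)
    (h12 : Disjoint D1 D2) (h1S : Disjoint D1 S) (h2S : Disjoint D2 S)
    (hD1 : ∃ F : Set (Set V), (∀ C ∈ F, IsCompOf G S C) ∧ D1 = ⋃₀ F)
    (hD2 : ∃ F : Set (Set V), (∀ C ∈ F, IsCompOf G S C) ∧ D2 = ⋃₀ F)
    (hfull1 : ∃ C, IsFullCompOf G S C ∧ C ⊆ D1)
    (hfull2 : ∃ C, IsFullCompOf G S C ∧ C ⊆ D2) :
    S \ W = {x | x ∉ W ∧ (∃ y ∈ D1 ∩ W, G.Adj x y) ∧ (∃ y ∈ D2 ∩ W, G.Adj x y)} := by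
  have extend : ∀ {u x y : V}, AvoidReach G S u x → G.Adj x y → y ∉ S →
      AvoidReach G S u y := by
    rintro u x y ⟨w, hw⟩ hxy hy
    refine ⟨w.concat hxy, ?_⟩
    intro z hz
    rw [SimpleGraph.Walk.support_concat, List.mem_append] at hz
    rcases hz with hz | hz
    · exact hw z hz
    · simp at hz; subst hz; exact hy
  ext x
  simp only [Set.mem_diff, Set.mem_setOf_eq]
  constructor
  · rintro ⟨hxS, hxW⟩
    obtain ⟨C1, ⟨hC1comp, hC1nb⟩, hC1D⟩ := hfull1
    obtain ⟨C2, ⟨hC2comp, hC2nb⟩, hC2D⟩ := hfull2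
    have h1 : x ∈ setNbhd G C1 := hC1nb ▸ hxS
    have h2 : x ∈ setNbhd G C2 := hC2nb ▸ hxS
    obtain ⟨-, y1, hy1C, hxy1⟩ := h1
    obtain ⟨-, y2, hy2C, hxy2⟩ := h2
    have hy1W : y1 ∈ W := by
      rcases hW hxy1 with h | h
      · exact absurd h hxW
      · exact h
    have hy2W : y2 ∈ W := by
      rcases hW hxy2 with h | h
      · exact absurd h hxW
      · exact h
    exact ⟨hxW, ⟨y1, ⟨hC1D hy1C, hy1W⟩, hxy1⟩, ⟨y2, ⟨hC2D hy2C, hy2W⟩, hxy2⟩⟩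
  · rintro ⟨hxW, ⟨y1, ⟨hy1D, hy1W⟩, hxy1⟩, ⟨y2, ⟨hy2D, hy2W⟩, hxy2⟩⟩
    refine ⟨?_, hxW⟩
    by_contra hxS
    have hxU : x ∈ D1 ∪ S ∪ D2 := hcover ▸ Set.mem_univ x
    have hy1S : y1 ∉ S := fun h => h1S.ne_of_mem hy1D h rfl
    have hy2S : y2 ∉ S := fun h => h2S.ne_of_mem hy2D h rfl
    rcases hxU with (hx | hx) | hx
    · -- x ∈ D1 : its component contains y2, contradiction with y2 ∈ D2
      obtain ⟨F, hF, hFD⟩ := hD1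
      rw [hFD] at hx
      obtain ⟨C, hCF, hxC⟩ := hx
      obtain ⟨v, hvS, hCeq⟩ := hF C hCF
      have hreach : AvoidReach G S v x := by rw [hCeq] at hxC; exact hxC
      have : y2 ∈ C := by
        rw [hCeq]; exact extend hreach hxy2 hy2S
      have hy2D1 : y2 ∈ D1 := hFD ▸ ⟨C, hCF, this⟩
      exact h12.ne_of_mem hy2D1 hy2D rfl
    · exact hxS hx
    · obtain ⟨F, hF, hFD⟩ := hD2
      rw [hFD] at hx
      obtain ⟨C, hCF, hxC⟩ := hx
      obtain ⟨v, hvS, hCeq⟩ := hF C hCF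
      have hreach : AvoidReach G S v x := by rw [hCeq] at hxC; exact hxC
      have : y1 ∈ C := by
        rw [hCeq]; exact extend hreach hxy1 hy1S
      have hy1D2 : y1 ∈ D2 := hFD ▸ ⟨C, hCF, this⟩
      exact h12.ne_of_mem hy1D hy1D2 rfl
end

section
/- Every finite simple graph G has at most 3^{vc(G)} minimal separators. -/
open SimpleGraph

universe u

section AuxSep

variable {V : Type} {G : SimpleGraph V} {S : Set V}

lemma avoidReach_notMem_right {a b : V} (h : AvoidReach G S a b) : b ∉ S := by
  obtain ⟨w, hw⟩ := h
  exact hw b w.end_mem_support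

lemma avoidReach_refl {a : V} (ha : a ∉ S) : AvoidReach G S a a :=
  ⟨SimpleGraph.Walk.nil, by simpa using ha⟩

lemma avoidReach_snoc {a c b : V} (h : AvoidReach G S a c) (hadj : G.Adj c b)
    (hb : b ∉ S) : AvoidReach G S a b := by
  obtain ⟨w, hw⟩ := h
  refine ⟨w.concat hadj, ?_⟩
  intro x hx
  rw [SimpleGraph.Walk.support_concat, List.mem_append] at hx
  rcases hx with hx | hx
  · exact hw x hx
  · simp only [List.mem_singleton] at hx
    subst hx; exact hb

lemma avoidReach_symm {a b : V} (h : AvoidReach G S a b) : AvoidReach G S b a := by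
  obtain ⟨w, hw⟩ := h
  refine ⟨w.reverse, ?_⟩
  intro x hx
  rw [SimpleGraph.Walk.support_reverse, List.mem_reverse] at hx
  exact hw x hx

lemma avoidReach_trans {a b c : V} (h1 : AvoidReach G S a b) (h2 : AvoidReach G S b c) :
    AvoidReach G S a c := by
  obtain ⟨w1, hw1⟩ := h1
  obtain ⟨w2, hw2⟩ := h2
  refine ⟨w1.append w2, ?_⟩
  intro x hx
  rw [SimpleGraph.Walk.support_append, List.mem_append] at hx
  rcases hx with hx | hx
  · exact hw1 x hx
  · exact hw2 x (List.mem_of_mem_tail hx)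

lemma avoid_key {s u v : V} (hno : ∀ y, G.Adj s y → ¬ AvoidReach G S u y) :
    ∀ (c : V) (p : G.Walk c v), AvoidReach G S u c →
      (∀ x ∈ p.support, x ∉ S \ {s}) → AvoidReach G S u v := by
  intro c p
  induction p with
  | nil => intro hc _; exact hc
  | @cons c b v hadj q ih =>
    intro hc hsup
    have hb : b ∉ S := by
      intro hbS
      have hbs : b = s := by
        by_contra hne
        exact hsup b (by simp) ⟨hbS, hne⟩
      subst hbs
      exact hno c hadj.symm hc
    exact ih (avoidReach_snoc hc hadj hb) (fun x hx => hsup x (by simp [hx]))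

/-- In a minimal `u,v`-separator, every vertex of `S` has a neighbour in the
component of `u`. -/
lemma minSep_full {u v s : V} (h : IsMinSep G S u v) (hs : s ∈ S) :
    ∃ y, G.Adj s y ∧ AvoidReach G S u y := by
  by_contra hno
  push_neg at hno
  have hT : IsSep G (S \ {s}) u v := by
    refine ⟨fun h' => h.1.1 h'.1, fun h' => h.1.2.1 h'.1, ?_⟩
    rintro ⟨w, hw⟩
    exact h.1.2.2 (avoid_key hno u w (avoidReach_refl h.1.1) hw)
  exact h.2 (S \ {s}) (Set.sdiff_singleton_ssubset.mpr hs) hT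

lemma isSep_symm {u v : V} (h : IsSep G S u v) : IsSep G S v u :=
  ⟨h.2.1, h.1, fun hr => h.2.2 (avoidReach_symm hr)⟩

lemma isMinSep_symm {u v : V} (h : IsMinSep G S u v) : IsMinSep G S v u :=
  ⟨isSep_symm h.1, fun T hT hsep => h.2 T hT (isSep_symm hsep)⟩

/-- Reconstruction of a minimal separator from its trace on a vertex cover together with
the trace of the `u`-side component. -/
lemma minSep_recon {W : Set V} (hW : IsVC G W) {u v : V} (h : IsMinSep G S u v) :
    S = (S ∩ W) ∪ {x | x ∉ W ∧
      (∃ y ∈ W, (y ∉ S ∧ AvoidReach G S u y) ∧ G.Adj x y) ∧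
      (∃ z ∈ W, (z ∉ S ∧ ¬ AvoidReach G S u z) ∧ G.Adj x z)} := by
  ext x
  constructor
  · intro hx
    by_cases hxW : x ∈ W
    · exact Or.inl ⟨hx, hxW⟩
    · refine Or.inr ⟨hxW, ?_, ?_⟩
      · obtain ⟨y, hadj, hy⟩ := minSep_full h hx
        have hyW : y ∈ W := (hW hadj).resolve_left hxW
        exact ⟨y, hyW, ⟨avoidReach_notMem_right hy, hy⟩, hadj⟩
      · obtain ⟨z, hadj, hz⟩ := minSep_full (isMinSep_symm h) hx
        have hzW : z ∈ W := (hW hadj).resolve_left hxW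
        refine ⟨z, hzW, ⟨avoidReach_notMem_right hz, ?_⟩, hadj⟩
        intro huz
        exact h.1.2.2 (avoidReach_trans huz (avoidReach_symm hz))
  · rintro (⟨hx, _⟩ | ⟨hxW, ⟨y, hyW, ⟨hyS, hyR⟩, hxy⟩, ⟨z, hzW, ⟨hzS, hzR⟩, hxz⟩⟩)
    · exact hx
    · by_contra hxS
      have hxR : AvoidReach G S u x := avoidReach_snoc hyR hxy.symm hxS
      exact hzR (avoidReach_snoc hxR hxz hzS)

lemma label_eq_iff {p₁ q₁ p₂ q₂ : Prop} [Decidable p₁] [Decidable q₁] [Decidable p₂]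
    [Decidable q₂]
    (h : (if p₁ then (0 : Fin 3) else if q₁ then 1 else 2)
       = (if p₂ then (0 : Fin 3) else if q₂ then 1 else 2)) :
    (p₁ ↔ p₂) ∧ ((¬ p₁ ∧ q₁) ↔ (¬ p₂ ∧ q₂)) ∧ ((¬ p₁ ∧ ¬ q₁) ↔ (¬ p₂ ∧ ¬ q₂)) := by
  split_ifs at h <;> first
    | (exact absurd h (by decide))
    | (constructor <;> [tauto; constructor <;> tauto])

end AuxSep

theorem statement_1 {V : Type} [Fintype V] (G : SimpleGraph V) :
    {S : Set V | IsMinimalSeparator G S}.ncard ≤ 3 ^ vcNum G := by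
  classical
  -- obtain a minimum vertex cover `W`
  have hne : {n | ∃ W : Set V, IsVC G W ∧ W.ncard = n}.Nonempty :=
    ⟨(Set.univ : Set V).ncard, Set.univ, fun a b _ => Or.inl trivial, rfl⟩
  obtain ⟨W, hWvc, hWcard⟩ : ∃ W : Set V, IsVC G W ∧ W.ncard = vcNum G :=
    Nat.sInf_mem hne
  -- the labeling map
  let f : Set V → (W → Fin 3) := fun S w =>
    if h : IsMinimalSeparator G S then
      (if (w : V) ∈ S then 0
       else if AvoidReach G S (Classical.choose h) (w : V) then 1 else 2)
    else 0
  have hinj : Set.InjOn f {S : Set V | IsMinimalSeparator G S} := by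
    intro S₁ h₁ S₂ h₂ hf
    simp only [Set.mem_setOf_eq] at h₁ h₂
    obtain ⟨v₁, hmin₁⟩ := Classical.choose_spec h₁
    obtain ⟨v₂, hmin₂⟩ := Classical.choose_spec h₂
    set u₁ := Classical.choose h₁ with hu₁
    set u₂ := Classical.choose h₂ with hu₂
    have hlab : ∀ y (hy : y ∈ W),
        ((y ∈ S₁ ↔ y ∈ S₂) ∧
         ((y ∉ S₁ ∧ AvoidReach G S₁ u₁ y) ↔ (y ∉ S₂ ∧ AvoidReach G S₂ u₂ y)) ∧
         ((y ∉ S₁ ∧ ¬ AvoidReach G S₁ u₁ y) ↔ (y ∉ S₂ ∧ ¬ AvoidReach G S₂ u₂ y))) := by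
      intro y hy
      have := congrFun hf ⟨y, hy⟩
      simp only [f, dif_pos h₁, dif_pos h₂] at this
      exact label_eq_iff this
    have hr₁ := minSep_recon hWvc hmin₁
    have hr₂ := minSep_recon hWvc hmin₂
    ext x
    rw [Set.ext_iff] at hr₁ hr₂
    rw [hr₁ x, hr₂ x]
    simp only [Set.mem_union, Set.mem_inter_iff, Set.mem_setOf_eq]
    constructor
    · rintro (⟨hxS, hxW⟩ | ⟨hxW, ⟨y, hyW, hy, hxy⟩, ⟨z, hzW, hz, hxz⟩⟩)
      · exact Or.inl ⟨((hlab x hxW).1).mp hxS, hxW⟩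
      · exact Or.inr ⟨hxW, ⟨y, hyW, ((hlab y hyW).2.1).mp hy, hxy⟩,
          ⟨z, hzW, ((hlab z hzW).2.2).mp hz, hxz⟩⟩
    · rintro (⟨hxS, hxW⟩ | ⟨hxW, ⟨y, hyW, hy, hxy⟩, ⟨z, hzW, hz, hxz⟩⟩)
      · exact Or.inl ⟨((hlab x hxW).1).mpr hxS, hxW⟩
      · exact Or.inr ⟨hxW, ⟨y, hyW, ((hlab y hyW).2.1).mpr hy, hxy⟩,
          ⟨z, hzW, ((hlab z hzW).2.2).mpr hz, hxz⟩⟩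
  calc {S : Set V | IsMinimalSeparator G S}.ncard
      = (f '' {S : Set V | IsMinimalSeparator G S}).ncard :=
        (Set.ncard_image_of_injOn hinj).symm
    _ ≤ (Set.univ : Set (W → Fin 3)).ncard :=
        Set.ncard_le_ncard (Set.subset_univ _) Set.finite_univ
    _ = Fintype.card (W → Fin 3) := by
        rw [Set.ncard_univ, Nat.card_eq_fintype_card]
    _ = 3 ^ (Fintype.card W) := by
        simp [Fintype.card_fun]
    _ = 3 ^ vcNum G := by
        rw [← hWcard, Set.ncard_eq_toFinset_card']
        simp
end

section
/- Let H be obtained from a graph G with vertex set {v_1,…,v_k} by expanding each vertex v_i by a module M_i = (V_i, E_i). If S is a minimal y,z-separator of H for two vertices y, z ∈ V_i, then S ∩ V_i is a minimal separator of the graph M_i and S \ V_i = N_H(V_i). -/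
open SimpleGraph

universe u

/-- The graph `H` obtained from `G` (with vertex set `{v_1, …, v_k} = Fin k`) by expanding
each vertex `i` by the module `M i`: the vertex set is the disjoint union `Σ i, V i`;
within each `V i` the edges are those of `M i`, and `a ∈ V i` is adjacent to `b ∈ V j`
(`i ≠ j`) iff `i` and `j` are adjacent in `G`. -/
def expandG {k : ℕ} {V : Fin k → Type u} (G : SimpleGraph (Fin k))
    (M : ∀ i, SimpleGraph (V i)) : SimpleGraph (Σ i, V i) :=
  SimpleGraph.fromRel (fun a b =>
    (∃ h : a.1 = b.1, (M b.1).Adj (h ▸ a.2) b.2) ∨ (a.1 ≠ b.1 ∧ G.Adj a.1 b.1))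

/-- The set of vertices of the expanded graph coming from the module `M i`,
i.e. the copy of `V i`. -/
def modSet {k : ℕ} {V : Fin k → Type u} (i : Fin k) : Set (Σ i, V i) := {x | x.1 = i}


section moduleHelpers
variable {k : ℕ} {V : Fin k → Type} {G : SimpleGraph (Fin k)} {M : ∀ i, SimpleGraph (V i)}

lemma expand_adj_same {i : Fin k} {u w : V i} :
    (expandG G M).Adj ⟨i, u⟩ ⟨i, w⟩ ↔ (M i).Adj u w := by
  constructor
  · rintro ⟨hne, (⟨h, hadj⟩ | ⟨h, _⟩) | (⟨h, hadj⟩ | ⟨h, _⟩)⟩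
    · exact hadj
    · exact absurd rfl h
    · exact hadj.symm
    · exact absurd rfl h
  · intro h
    refine ⟨?_, Or.inl (Or.inl ⟨rfl, h⟩)⟩
    simp only [ne_eq, Sigma.mk.inj_iff, heq_eq_eq, true_and]
    exact h.ne

lemma expand_adj_diff {i : Fin k} {a : Σ j, V j} (hne : a.1 ≠ i) (u : V i) :
    (expandG G M).Adj a ⟨i, u⟩ ↔ G.Adj a.1 i := by
  constructor
  · rintro ⟨_, (⟨h, _⟩ | ⟨_, hadj⟩) | (⟨h, _⟩ | ⟨_, hadj⟩)⟩
    · exact absurd h hne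
    · exact hadj
    · exact absurd h.symm hne
    · exact hadj.symm
  · intro h
    exact ⟨fun hc => hne (congrArg Sigma.fst hc), Or.inl (Or.inr ⟨hne, h⟩)⟩

lemma support_in_module {i : Fin k} :
    ∀ {a b : Σ j, V j} (w : (expandG G M).Walk a b),
      a ∈ modSet i → (∀ x ∈ w.support, x ∉ setNbhd (expandG G M) (modSet i)) →
      ∀ x ∈ w.support, x ∈ modSet i := by
  intro a b w
  induction w with
  | nil =>
    intro ha _ x hx
    rw [SimpleGraph.Walk.support_nil, List.mem_singleton] at hx
    subst hx; exact ha
  | @cons u v b h p ih =>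
    intro ha havoid x hx
    have hv : v ∈ modSet i := by
      by_contra hvi
      exact havoid v (by simp) ⟨hvi, u, ha, h.symm⟩
    rw [SimpleGraph.Walk.support_cons, List.mem_cons] at hx
    rcases hx with rfl | hx
    · exact ha
    · exact ih hv (fun t ht => havoid t (by simp [ht])) x hx

lemma project_walk {i : Fin k} :
    ∀ {a b : Σ j, V j} (w : (expandG G M).Walk a b),
      (∀ x ∈ w.support, x ∈ modSet i) →
      ∀ (ya yb : V i), a = ⟨i, ya⟩ → b = ⟨i, yb⟩ →
      ∃ w' : (M i).Walk ya yb, ∀ x ∈ w'.support, (⟨i, x⟩ : Σ j, V j) ∈ w.support := by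
  intro a b w
  induction w with
  | nil =>
    intro _ ya yb ha hb
    subst ha
    obtain ⟨rfl⟩ : ya = yb := by simpa using hb
    exact ⟨SimpleGraph.Walk.nil, by simp⟩
  | @cons u v b h p ih =>
    intro hsup ya yb ha hb
    have hv : v ∈ modSet i := hsup v (by simp)
    obtain ⟨j, vv⟩ := v
    have hj : j = i := hv
    subst hj
    subst ha
    obtain ⟨w', hw'⟩ := ih (fun t ht => hsup t (by simp [ht])) vv yb rfl hb
    refine ⟨SimpleGraph.Walk.cons (expand_adj_same.mp h) w', ?_⟩
    intro x hx
    rw [SimpleGraph.Walk.support_cons, List.mem_cons] at hx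
    rcases hx with rfl | hx
    · simp
    · exact List.mem_cons_of_mem _ (hw' x hx)

end moduleHelpers

theorem statement_7 {k : ℕ} {V : Fin k → Type} [∀ i, Fintype (V i)]
    (G : SimpleGraph (Fin k)) (M : ∀ i, SimpleGraph (V i))
    (S : Set (Σ i, V i)) (i : Fin k) (y z : V i)
    (hS : IsMinSep (expandG G M) S ⟨i, y⟩ ⟨i, z⟩) :
    IsMinimalSeparator (M i) (Sigma.mk i ⁻¹' S) ∧
      S \ modSet i = setNbhd (expandG G M) (modSet i) := by
  obtain ⟨⟨hyS, hzS, hreach⟩, hmin⟩ := hS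
  -- Step 1: the neighbourhood of the module is contained in S
  have hNS : setNbhd (expandG G M) (modSet i) ⊆ S := by
    rintro a ⟨haV, c, hcV, hac⟩
    by_contra haS
    obtain ⟨j, cc⟩ := c
    obtain rfl : i = j := hcV.symm
    have hGa : G.Adj a.1 i := (expand_adj_diff haV cc).mp hac
    have h1 : (expandG G M).Adj ⟨i, y⟩ a := ((expand_adj_diff haV y).mpr hGa).symm
    have h2 : (expandG G M).Adj a ⟨i, z⟩ := (expand_adj_diff haV z).mpr hGa
    refine hreach ⟨SimpleGraph.Walk.cons h1 (SimpleGraph.Walk.cons h2 SimpleGraph.Walk.nil), ?_⟩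
    intro x hx
    simp only [SimpleGraph.Walk.support_cons, SimpleGraph.Walk.support_nil,
      List.mem_cons, List.mem_singleton] at hx
    rcases hx with rfl | rfl | rfl | h
    · exact hyS
    · exact haS
    · exact hzS
    · exact absurd h (by simp)
  -- Step 2: S \ modSet i = setNbhd
  have hdiff : S \ modSet i = setNbhd (expandG G M) (modSet i) := by
    apply Set.Subset.antisymm
    · rintro s ⟨hsS, hsV⟩
      by_contra hsN
      refine hmin (S \ {s}) (Set.sdiff_singleton_ssubset.mpr hsS) ⟨?_, ?_, ?_⟩
      · exact fun h => hyS h.1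
      · exact fun h => hzS h.1
      · rintro ⟨w, hw⟩
        have hNT : setNbhd (expandG G M) (modSet i) ⊆ S \ {s} := by
          intro x hx
          exact ⟨hNS hx, by rintro rfl; exact hsN hx⟩
        have hsup : ∀ x ∈ w.support, x ∈ modSet i :=
          support_in_module w rfl (fun x hx hxN => hw x hx (hNT hxN))
        refine hreach ⟨w, fun x hx hxS => ?_⟩
        by_cases hxs : x = s
        · subst hxs; exact hsV (hsup x hx)
        · exact hw x hx ⟨hxS, hxs⟩
    · intro a ha
      refine ⟨hNS ha, ha.1⟩
  refine ⟨⟨y, z, ⟨?_, ?_, ?_⟩, ?_⟩, hdiff⟩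
  · exact hyS
  · exact hzS
  · -- S ∩ V i separates y and z in M i
    rintro ⟨w', hw'⟩
    let f : M i →g expandG G M := ⟨Sigma.mk i, fun h => expand_adj_same.mpr h⟩
    refine hreach ⟨w'.map f, ?_⟩
    intro x hx hxS
    rw [SimpleGraph.Walk.support_map, List.mem_map] at hx
    obtain ⟨t, ht, rfl⟩ := hx
    exact hw' t ht hxS
  · -- minimality
    intro T hT hTsep
    obtain ⟨hyT, hzT, hreachT⟩ := hTsep
    set T' : Set (Σ j, V j) := Sigma.mk i '' T ∪ (S \ modSet i) with hT'
    have hT'sub : T' ⊆ S := by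
      rintro x (⟨t, htT, rfl⟩ | hx)
      · exact hT.1 htT
      · exact hx.1
    have hT'ss : T' ⊂ S := by
      obtain ⟨u, huS, huT⟩ := Set.exists_of_ssubset hT
      rw [Set.ssubset_iff_of_subset hT'sub]
      refine ⟨⟨i, u⟩, huS, ?_⟩
      rintro (⟨t, htT, he⟩ | hx)
      · obtain ⟨rfl⟩ : t = u := by simpa using he
        exact huT htT
      · exact hx.2 rfl
    refine hmin T' hT'ss ⟨?_, ?_, ?_⟩
    · rintro (⟨t, htT, he⟩ | hx)
      · obtain ⟨rfl⟩ : t = y := by simpa using he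
        exact hyT htT
      · exact hx.2 rfl
    · rintro (⟨t, htT, he⟩ | hx)
      · obtain ⟨rfl⟩ : t = z := by simpa using he
        exact hzT htT
      · exact hx.2 rfl
    · rintro ⟨w, hw⟩
      have hNT' : setNbhd (expandG G M) (modSet i) ⊆ T' := by
        rw [← hdiff]; exact Set.subset_union_right
      have hsup : ∀ x ∈ w.support, x ∈ modSet i :=
        support_in_module w rfl (fun x hx hxN => hw x hx (hNT' hxN))
      obtain ⟨w', hw'⟩ := project_walk w hsup y z rfl rfl
      exact hreachT ⟨w', fun t ht htT =>
        hw ⟨i, t⟩ (hw' t ht) (Or.inl ⟨t, htT, rfl⟩)⟩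
end

section
/- Let H be obtained from a graph G with vertex set {v_1,…,v_k} by expanding each vertex v_i by a module M_i = (V_i, E_i), and let S be a minimal separator of H. Then one of the following holds: (1) S is the expansion of a minimal separator S_G of G, i.e., S = ∪_{v_i ∈ S_G} V_i for some minimal separator S_G of G; or (2) there is an index i ∈ {1,…,k} such that S ∩ V_i is a minimal separator of M_i and S \ V_i = N_H(V_i). -/
open SimpleGraph

universe u

section helpers
variable {α : Type*} {Γ : SimpleGraph α} {S : Set α}

lemma ar_refl {x : α} (hx : x ∉ S) : AvoidReach Γ S x x := ⟨Walk.nil, by simp [hx]⟩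

lemma ar_symm {x y : α} (h : AvoidReach Γ S x y) : AvoidReach Γ S y x := by
  obtain ⟨w, hw⟩ := h; exact ⟨w.reverse, by simpa using hw⟩

lemma ar_trans {x y z : α} (h1 : AvoidReach Γ S x y) (h2 : AvoidReach Γ S y z) :
    AvoidReach Γ S x z := by
  obtain ⟨w1, hw1⟩ := h1; obtain ⟨w2, hw2⟩ := h2
  refine ⟨w1.append w2, fun t ht => ?_⟩
  rcases (Walk.mem_support_append_iff _ _).1 ht with h | h
  exacts [hw1 t h, hw2 t h]

lemma ar_left {x y : α} (h : AvoidReach Γ S x y) : x ∉ S := by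
  obtain ⟨w, hw⟩ := h; exact hw x w.start_mem_support

lemma ar_right {x y : α} (h : AvoidReach Γ S x y) : y ∉ S := by
  obtain ⟨w, hw⟩ := h; exact hw y w.end_mem_support

lemma ar_step {u a b : α} (h : AvoidReach Γ S u a) (hab : Γ.Adj a b) (hb : b ∉ S) :
    AvoidReach Γ S u b :=
  ar_trans h ⟨Walk.cons hab Walk.nil, by
    intro x hx
    simp only [Walk.support_cons, Walk.support_nil, List.mem_cons, List.mem_singleton] at hx
    rcases hx with rfl | hx | hx
    · exact ar_right h
    · exact hx ▸ hb
    · simp at hx⟩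

lemma sep_symm {u v : α} (h : IsSep Γ S u v) : IsSep Γ S v u :=
  ⟨h.2.1, h.1, fun hr => h.2.2 (ar_symm hr)⟩

lemma minsep_symm {u v : α} (h : IsMinSep Γ S u v) : IsMinSep Γ S v u :=
  ⟨sep_symm h.1, fun T hT hs => h.2 T hT (sep_symm hs)⟩

lemma reach_extend {u s : α} (hns : ∀ c, AvoidReach Γ S u c → ¬ Γ.Adj c s) :
    ∀ {a b : α} (w : Γ.Walk a b), (∀ x ∈ w.support, x ∉ S \ {s}) →
      AvoidReach Γ S u a → AvoidReach Γ S u b := by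
  intro a b w
  induction w with
  | nil => exact fun _ h => h
  | cons hadj w ih =>
    rename_i a c b
    intro hav ha
    have hc : c ∉ S := by
      intro hcS
      have : c = s := by
        have := hav c (by simp)
        by_contra hne
        exact this ⟨hcS, hne⟩
      exact hns _ ha (this ▸ hadj)
    exact ih (fun x hx => hav x (by simp [hx])) (ar_step ha hadj hc)

lemma fullness {u v : α} (h : IsMinSep Γ S u v) :
    ∀ s ∈ S, ∃ c, AvoidReach Γ S u c ∧ Γ.Adj c s := by
  intro s hs
  by_contra hcon
  push_neg at hcon
  have hns : ∀ c, AvoidReach Γ S u c → ¬ Γ.Adj c s := hcon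
  apply h.2 (S \ {s}) ⟨Set.diff_subset, fun hsub => (hsub hs).2 rfl⟩
  refine ⟨fun hu => h.1.1 hu.1, fun hv => h.1.2.1 hv.1, fun hr => ?_⟩
  obtain ⟨w, hw⟩ := hr
  exact h.1.2.2 (reach_extend hns w hw (ar_refl h.1.1))

lemma exit_lemma {A : Set α} :
    ∀ {a b : α} (w : Γ.Walk a b), (∀ x ∈ w.support, x ∉ S) → a ∈ A → b ∉ A →
      ∃ p q, AvoidReach Γ S a p ∧ Γ.Adj p q ∧ p ∈ A ∧ q ∉ A ∧ q ∉ S := by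
  intro a b w
  induction w with
  | nil => exact fun _ ha hb => absurd ha hb
  | cons hadj w ih =>
    rename_i a c b
    intro hav ha hb
    have hcS : c ∉ S := hav c (by simp)
    by_cases hc : c ∈ A
    · obtain ⟨p, q, hr, h1, h2, h3, h4⟩ := ih (fun x hx => hav x (by simp [hx])) hc hb
      exact ⟨p, q, ar_trans (ar_step (ar_refl (hav a (by simp))) hadj hcS) hr, h1, h2, h3, h4⟩
    · exact ⟨a, c, ar_refl (hav a (by simp)), hadj, ha, hc, hcS⟩

end helpers

section expand
variable {k : ℕ} {V : Fin k → Type} (G : SimpleGraph (Fin k)) (M : ∀ i, SimpleGraph (V i))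

lemma adj_same {i : Fin k} {x y : V i} :
    (expandG G M).Adj ⟨i, x⟩ ⟨i, y⟩ ↔ (M i).Adj x y := by
  simp only [expandG, fromRel_adj, ne_eq, not_true_eq_false, false_and, or_false]
  constructor
  · rintro ⟨hne, ⟨-, hM⟩ | ⟨-, hM⟩⟩
    · exact hM
    · exact hM.symm
  · intro h
    refine ⟨?_, Or.inl ⟨trivial, h⟩⟩
    simp only [ne_eq, Sigma.mk.inj_iff, heq_eq_eq, true_and, not_and]
    intro he; exact h.ne he

lemma adj_diff {a b : Σ i, V i} (hne : a.1 ≠ b.1) :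
    (expandG G M).Adj a b ↔ G.Adj a.1 b.1 := by
  simp only [expandG, fromRel_adj]
  constructor
  · rintro ⟨-, (⟨h, -⟩ | ⟨-, hG⟩) | (⟨h, -⟩ | ⟨-, hG⟩)⟩
    · exact absurd h hne
    · exact hG
    · exact absurd h.symm hne
    · exact hG.symm
  · intro h
    exact ⟨fun he => hne (congrArg Sigma.fst he), Or.inl (Or.inr ⟨hne, h⟩)⟩

variable {S : Set (Σ i, V i)}

lemma lift_walk : ∀ {a b : Fin k} (p : G.Walk a b), a ≠ b →
    (∀ j ∈ p.support, ∃ z : V j, (⟨j, z⟩ : Σ i, V i) ∉ S) →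
    ∀ (x : V a) (y : V b), (⟨a, x⟩ : Σ i, V i) ∉ S → (⟨b, y⟩ : Σ i, V i) ∉ S →
    AvoidReach (expandG G M) S ⟨a, x⟩ ⟨b, y⟩ := by
  intro a b p
  induction p with
  | nil => exact fun h _ _ _ _ _ => absurd rfl h
  | cons hadj p ih =>
    rename_i a c b
    intro _ hsupp x y hx hy
    by_cases hcb : c = b
    · subst hcb
      have : (expandG G M).Adj ⟨a, x⟩ ⟨c, y⟩ := (adj_diff G M hadj.ne).2 hadj
      exact ar_step (ar_refl hx) this hy
    · obtain ⟨z, hz⟩ := hsupp c (by simp)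
      have h1 : (expandG G M).Adj ⟨a, x⟩ ⟨c, z⟩ := (adj_diff G M hadj.ne).2 hadj
      exact ar_trans (ar_step (ar_refl hx) h1 hz)
        (ih hcb (fun j hj => hsupp j (by simp [hj])) z y hz hy)

lemma proj_walk {a b : Σ i, V i} (w : (expandG G M).Walk a b) :
    ∃ p : G.Walk a.1 b.1, ∀ j ∈ p.support, ∃ z ∈ w.support, Sigma.fst z = j := by
  induction w with
  | nil => exact ⟨Walk.nil, by simp⟩
  | cons hadj w ih =>
    rename_i a c b
    obtain ⟨p, hp⟩ := ih
    by_cases h : a.1 = c.1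
    · refine ⟨p.copy h.symm rfl, ?_⟩
      intro j hj
      rw [Walk.support_copy] at hj
      obtain ⟨z, hz, hz2⟩ := hp j hj
      exact ⟨z, by simp [hz], hz2⟩
    · refine ⟨Walk.cons ((adj_diff G M h).1 hadj) p, ?_⟩
      intro j hj
      rw [Walk.support_cons] at hj
      rcases List.mem_cons.1 hj with rfl | hj
      · exact ⟨a, by simp, rfl⟩
      · obtain ⟨z, hz, hz2⟩ := hp j hj
        exact ⟨z, by simp [hz], hz2⟩

lemma mod_reach {i : Fin k} {x y : V i} {Si : Set (V i)}
    (hcompat : ∀ z : V i, z ∉ Si → (⟨i, z⟩ : Σ i, V i) ∉ S)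
    (h : AvoidReach (M i) Si x y) :
    AvoidReach (expandG G M) S ⟨i, x⟩ ⟨i, y⟩ := by
  obtain ⟨w, hw⟩ := h
  refine ⟨w.map ⟨Sigma.mk i, fun hadj => (adj_same G M).2 hadj⟩, ?_⟩
  intro t ht
  rw [Walk.support_map, List.mem_map] at ht
  obtain ⟨z, hz, rfl⟩ := ht
  exact hcompat z (hw z hz)

lemma stay_lemma {S'' : Set (Σ i, V i)} {i : Fin k} {T : Set (V i)}
    (hnb : ∀ b : Σ i, V i, b.1 ≠ i → ∀ z : V i, (expandG G M).Adj b ⟨i, z⟩ → b ∈ S'')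
    (hT : ∀ z : V i, z ∈ T → (⟨i, z⟩ : Σ i, V i) ∈ S'') :
    ∀ {a b : Σ i, V i} (w : (expandG G M).Walk a b),
      (∀ t ∈ w.support, t ∉ S'') → ∀ (x y : V i), a = ⟨i, x⟩ → b = ⟨i, y⟩ →
      AvoidReach (M i) T x y := by
  intro a b w
  induction w with
  | nil =>
    intro hav x y ha hb
    obtain ⟨-, h2⟩ := Sigma.mk.inj_iff.1 (ha.symm.trans hb)
    cases eq_of_heq h2
    exact ar_refl (fun hxT => hav _ (by simp) (ha ▸ hT x hxT))
  | cons hadj w ih =>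
    rename_i a c b
    intro hav x y ha hb
    subst ha
    have hcS : c ∉ S'' := hav c (by simp)
    have hc1 : c.1 = i := by
      by_contra h
      exact hcS (hnb c h x hadj.symm)
    obtain ⟨c1, c2⟩ := c
    cases hc1
    have hM := (adj_same G M).1 hadj
    have hxT : x ∉ T := fun h => hav _ (by simp) (hT x h)
    have hc2T : c2 ∉ T := fun h => hcS (hT c2 h)
    exact ar_trans (ar_step (ar_refl hxT) hM hc2T)
      (ih (fun t ht => hav t (by simp [ht])) c2 y rfl hb)

lemma comp_in_module {u v : Σ i, V i}
    (hreach : ¬ AvoidReach (expandG G M) S u v)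
    {i : Fin k} {x y : V i}
    (hx : AvoidReach (expandG G M) S u ⟨i, x⟩)
    (hy : AvoidReach (expandG G M) S v ⟨i, y⟩) :
    ∀ z, AvoidReach (expandG G M) S u z → z.1 = i := by
  intro z hz
  by_contra hzi
  obtain ⟨w, hw⟩ := ar_trans (ar_symm hx) hz
  obtain ⟨p, q, hrpq, hadj, hpA, hqA, hqS⟩ :=
    exit_lemma (A := modSet i) w hw rfl hzi
  have hp1 : p.1 = i := hpA
  have hq1 : (q.1 : Fin k) ≠ i := hqA
  have hGq : G.Adj q.1 i := by
    have := (adj_diff G M (show q.1 ≠ p.1 from hp1 ▸ hq1)).1 hadj.symm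
    rwa [hp1] at this
  have hqy : (expandG G M).Adj q ⟨i, y⟩ := (adj_diff G M hq1).2 hGq
  have huq : AvoidReach (expandG G M) S u q :=
    ar_trans hx (ar_step hrpq hadj hqS)
  have hvq : AvoidReach (expandG G M) S v q := ar_step hy hqy.symm hqS
  exact hreach (ar_trans huq (ar_symm hvq))

end expand

theorem statement_9 {k : ℕ} {V : Fin k → Type} [∀ i, Fintype (V i)]
    (G : SimpleGraph (Fin k)) (M : ∀ i, SimpleGraph (V i))
    (S : Set (Σ i, V i)) (hS : IsMinimalSeparator (expandG G M) S) :
    (∃ SG : Set (Fin k), IsMinimalSeparator G SG ∧ S = {x : Σ i, V i | x.1 ∈ SG}) ∨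
    (∃ i : Fin k, IsMinimalSeparator (M i) (Sigma.mk i ⁻¹' S) ∧
      S \ modSet i = setNbhd (expandG G M) (modSet i)) := by
  obtain ⟨u, v, hsep0, hmin⟩ := hS
  obtain ⟨u1, u2⟩ := u
  obtain ⟨v1, v2⟩ := v
  obtain ⟨huS, hvS, hreach⟩ := hsep0
  by_cases hcase : ∃ (i : Fin k) (x y : V i),
      AvoidReach (expandG G M) S ⟨u1, u2⟩ ⟨i, x⟩ ∧
      AvoidReach (expandG G M) S ⟨v1, v2⟩ ⟨i, y⟩
  · -- Case 1: S cuts inside a module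
    right
    obtain ⟨i0, x, y, hx, hy⟩ := hcase
    have hreach' : ¬ AvoidReach (expandG G M) S ⟨v1, v2⟩ ⟨u1, u2⟩ :=
      fun h => hreach (ar_symm h)
    have hC := comp_in_module G M hreach hx hy
    have hD := comp_in_module G M hreach' hy hx
    have hu1 : u1 = i0 := hC _ (ar_refl huS)
    have hv1 : v1 = i0 := hD _ (ar_refl hvS)
    subst hv1
    subst hu1
    have hNB : S \ modSet u1 = setNbhd (expandG G M) (modSet u1) := by
      ext s
      constructor
      · rintro ⟨hsS, hsm⟩
        obtain ⟨c, hcu, hcadj⟩ := fullness ⟨⟨huS, hvS, hreach⟩, hmin⟩ s hsS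
        exact ⟨hsm, c, hC c hcu, hcadj.symm⟩
      · rintro ⟨hsm, a, ha, hadj⟩
        have hs1 : s.1 ≠ u1 := hsm
        have hGa : G.Adj s.1 u1 := by
          have := (adj_diff G M (fun h => hsm (h.trans ha))).1 hadj
          rwa [ha] at this
        have hadx : (expandG G M).Adj s ⟨u1, x⟩ := (adj_diff G M hs1).2 hGa
        have hady : (expandG G M).Adj s ⟨u1, y⟩ := (adj_diff G M hs1).2 hGa
        constructor
        · by_contra hsS
          exact hreach (ar_trans (ar_step hx hadx.symm hsS)
            (ar_symm (ar_step hy hady.symm hsS)))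
        · exact hsm
    refine ⟨u1, ⟨u2, v2, ⟨huS, hvS, ?_⟩, ?_⟩, hNB⟩
    · intro h
      exact hreach (mod_reach G M (fun z hz => hz) h)
    · intro T hT hTsep
      obtain ⟨x0, hx0S, hx0T⟩ := Set.exists_of_ssubset hT
      have hS'sub : (S \ modSet u1) ∪ (Sigma.mk u1 '' T) ⊂ S := by
        constructor
        · apply Set.union_subset Set.diff_subset
          rintro _ ⟨t, htT, rfl⟩
          exact hT.1 htT
        · intro hsub
          have hmem : (⟨u1, x0⟩ : Σ u1, V u1) ∈ (S \ modSet u1) ∪ (Sigma.mk u1 '' T) :=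
            hsub hx0S
          rcases hmem with ⟨-, hm⟩ | ⟨t, htT, hte⟩
          · exact hm rfl
          · obtain ⟨-, h2⟩ := Sigma.mk.inj_iff.1 hte
            cases eq_of_heq h2
            exact hx0T htT
      refine hmin _ hS'sub ⟨?_, ?_, ?_⟩
      · rintro (⟨h1, -⟩ | ⟨t, htT, hte⟩)
        · exact huS h1
        · obtain ⟨-, h2⟩ := Sigma.mk.inj_iff.1 hte
          cases eq_of_heq h2
          exact hTsep.1 htT
      · rintro (⟨h1, -⟩ | ⟨t, htT, hte⟩)
        · exact hvS h1
        · obtain ⟨-, h2⟩ := Sigma.mk.inj_iff.1 hte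
          cases eq_of_heq h2
          exact hTsep.2.1 htT
      · rintro ⟨w, hw⟩
        have hnb : ∀ b : Σ u1, V u1, b.1 ≠ u1 → ∀ z : V u1, (expandG G M).Adj b ⟨u1, z⟩ →
            b ∈ (S \ modSet u1) ∪ (Sigma.mk u1 '' T) := by
          intro b hb z hadj
          have hmem : b ∈ setNbhd (expandG G M) (modSet u1) := ⟨hb, ⟨u1, z⟩, rfl, hadj⟩
          rw [← hNB] at hmem
          exact Or.inl hmem
        have hT' : ∀ z : V u1, z ∈ T →
            (⟨u1, z⟩ : Σ u1, V u1) ∈ (S \ modSet u1) ∪ (Sigma.mk u1 '' T) :=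
          fun z hz => Or.inr ⟨z, hz, rfl⟩
        exact hTsep.2.2 (stay_lemma G M hnb hT' w hw u2 v2 rfl rfl)
  · -- Case 2: S is a union of modules
    left
    push_neg at hcase
    have hcase' : ∀ a b : Σ i, V i, a.1 = b.1 →
        AvoidReach (expandG G M) S ⟨u1, u2⟩ a →
        AvoidReach (expandG G M) S ⟨v1, v2⟩ b → False := by
      rintro ⟨a1, a2⟩ ⟨b1, b2⟩ h ha hb
      cases h
      exact hcase a1 a2 b2 ha hb
    have hms : IsMinSep (expandG G M) S ⟨u1, u2⟩ ⟨v1, v2⟩ := ⟨⟨huS, hvS, hreach⟩, hmin⟩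
    have hfu := fullness hms
    have hfv := fullness (minsep_symm hms)
    have hallS : ∀ s ∈ S, ∀ t : V s.1, (⟨s.1, t⟩ : Σ i, V i) ∈ S := by
      intro s hsS t
      by_contra htS
      obtain ⟨c, hcu, hcadj⟩ := hfu s hsS
      obtain ⟨d, hdv, hdadj⟩ := hfv s hsS
      by_cases hc1 : c.1 = s.1
      · by_cases hd1 : d.1 = s.1
        · exact hcase' c d (hc1.trans hd1.symm) hcu hdv
        · have hGd : G.Adj d.1 s.1 := (adj_diff G M hd1).1 hdadj
          have hds : (expandG G M).Adj d ⟨s.1, t⟩ := (adj_diff G M (b := ⟨s.1, t⟩) hd1).2 hGd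
          exact hcase' c ⟨s.1, t⟩ hc1 hcu (ar_step hdv hds htS)
      · have hGc : G.Adj c.1 s.1 := (adj_diff G M hc1).1 hcadj
        have hut : AvoidReach (expandG G M) S ⟨u1, u2⟩ ⟨s.1, t⟩ :=
          ar_step hcu ((adj_diff G M (b := ⟨s.1, t⟩) hc1).2 hGc) htS
        by_cases hd1 : d.1 = s.1
        · exact hcase' ⟨s.1, t⟩ d hd1.symm hut hdv
        · have hGd : G.Adj d.1 s.1 := (adj_diff G M hd1).1 hdadj
          have hvt : AvoidReach (expandG G M) S ⟨v1, v2⟩ ⟨s.1, t⟩ :=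
            ar_step hdv ((adj_diff G M (b := ⟨s.1, t⟩) hd1).2 hGd) htS
          exact hreach (ar_trans hut (ar_symm hvt))
    have hSeq : ∀ z : Σ i, V i, z ∈ S ↔ z.1 ∈ {j : Fin k | ∀ t : V j, (⟨j, t⟩ : Σ i, V i) ∈ S} := by
      intro z
      constructor
      · exact fun hz t => hallS z hz t
      · intro hz
        have := hz z.2
        rwa [Sigma.eta] at this
    have huv1 : u1 ≠ v1 := fun h =>
      hcase' ⟨u1, u2⟩ ⟨v1, v2⟩ h (ar_refl huS) (ar_refl hvS)
    have hGsep : IsSep G {j : Fin k | ∀ t : V j, (⟨j, t⟩ : Σ i, V i) ∈ S} u1 v1 := by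
      refine ⟨fun h => huS (h u2), fun h => hvS (h v2), ?_⟩
      rintro ⟨p, hp⟩
      apply hreach
      refine lift_walk G M p huv1 ?_ u2 v2 huS hvS
      intro j hj
      exact not_forall.1 (hp j hj)
    have hPne : Set.ncard {j : Fin k | ∀ t : V j, (⟨j, t⟩ : Σ i, V i) ∈ S} ∈
        {n | ∃ T : Set (Fin k), T ⊆ {j : Fin k | ∀ t : V j, (⟨j, t⟩ : Σ i, V i) ∈ S} ∧
          IsSep G T u1 v1 ∧ T.ncard = n} := ⟨_, le_refl _, hGsep, rfl⟩
    obtain ⟨T0, hT0sub, hT0sep, hT0card⟩ := Nat.sInf_mem (Set.nonempty_of_mem hPne)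
    refine ⟨T0, ⟨u1, v1, hT0sep, ?_⟩, ?_⟩
    · intro T' hT' hT'sep
      have h1 : T'.ncard < T0.ncard := Set.ncard_lt_ncard hT' (Set.toFinite _)
      have h2 : T'.ncard ∈ {n | ∃ T : Set (Fin k),
          T ⊆ {j : Fin k | ∀ t : V j, (⟨j, t⟩ : Σ i, V i) ∈ S} ∧
          IsSep G T u1 v1 ∧ T.ncard = n} := ⟨T', hT'.subset.trans hT0sub, hT'sep, rfl⟩
      have h3 := Nat.sInf_le h2
      omega
    · ext z
      simp only [Set.mem_setOf_eq]
      constructor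
      · intro hzS
        by_contra hzT0
        have hssub : S \ modSet z.1 ⊂ S := ⟨Set.diff_subset, fun hsub => (hsub hzS).2 rfl⟩
        refine absurd (?_ : IsSep (expandG G M) (S \ modSet z.1) ⟨u1, u2⟩ ⟨v1, v2⟩)
          (hmin _ hssub)
        refine ⟨fun h => huS h.1, fun h => hvS h.1, ?_⟩
        rintro ⟨w, hw⟩
        obtain ⟨p, hp⟩ := proj_walk G M w
        refine hT0sep.2.2 ⟨p, ?_⟩
        intro j hj hjT0
        obtain ⟨z', hz', hz'1⟩ := hp j hj
        have hz'S : z' ∈ S := (hSeq z').2 (hz'1 ▸ hT0sub hjT0)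
        have hnm := hw z' hz'
        have hzmod : z'.1 = z.1 := by
          by_contra h
          exact hnm ⟨hz'S, h⟩
        refine hzT0 ?_
        rw [show z.1 = j from hzmod.symm.trans hz'1]
        exact hjT0
      · intro hzT
        exact (hSeq z).2 (hT0sub hzT)
end

section
/- Let H be obtained from a graph G with vertex set {v_1,…,v_k} by expanding each vertex v_i by a module M_i = (V_i, E_i). Let Ω be a potential maximal clique of H, and assume there is some V_i that intersects Ω but is not contained in Ω. Then Ω ∩ V_i is a potential maximal clique of M_i and Ω \ V_i = N_H(V_i). -/
open SimpleGraph

universe u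

namespace Aux
open SimpleGraph.Walk

lemma exists_S_of_walk {F : SimpleGraph V'} {X S : Set V'}
    (hcl : ∀ ⦃u w : V'⦄, F.Adj u w → u ∈ X → w ∈ X ∨ w ∈ S) :
    ∀ {a b : V'} (w : F.Walk a b), a ∈ X → b ∉ X → ∃ s ∈ w.support, s ∈ S := by
  intro a b w
  induction w with
  | nil => intro ha hb; exact absurd ha hb
  | cons h p ih =>
    intro ha hb
    rcases hcl h ha with hX | hS
    · obtain ⟨s, hs, hsS⟩ := ih hX hb
      exact ⟨s, by simp [hs], hsS⟩
    · exact ⟨_, by simp [start_mem_support], hS⟩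

lemma mem_tail_support_of_closed {F : SimpleGraph V'} {v : V'} (c : F.Walk v v)
    (hc : c ≠ Walk.nil) {x : V'} (hx : x ∈ c.support) : x ∈ c.support.tail := by
  cases c with
  | nil => exact absurd rfl hc
  | cons h p =>
    simp only [support_cons, List.tail_cons]
    rcases (by simpa using hx) with rfl | hx'
    · exact p.end_mem_support
    · exact hx'

lemma arc {F : SimpleGraph V'} {X S R : Set V'} {v a b : V'}
    (W : F.Walk v v) (hW : W.IsCycle)
    (hXS : ∀ ⦃u w : V'⦄, F.Adj u w → u ∈ X → w ∈ X ∨ w ∈ S)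
    (hRS : ∀ ⦃u w : V'⦄, F.Adj u w → u ∈ R → w ∈ R ∨ w ∈ S)
    (hXSd : ∀ x ∈ X, x ∉ S) (hRSd : ∀ x ∈ R, x ∉ S) (hXRd : ∀ x ∈ X, x ∉ R)
    (ha : a ∈ W.support) (hb : b ∈ W.support) (haX : a ∈ X) (hbR : b ∈ R) :
    ∃ s1 ∈ W.support, ∃ s2 ∈ W.support, s1 ∈ S ∧ s2 ∈ S ∧ s1 ≠ s2 ∧
      s(s1, s2) ∉ W.edges := by
  classical
  have hWne : W ≠ Walk.nil := hW.ne_nil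
  set W₁ := W.rotate a ha with hW₁def
  have hW₁ : W₁.IsCycle := hW.rotate ha
  have hsuppperm : W₁.support.tail ~r W.support.tail := support_rotate W a ha
  have hedgesperm : W₁.edges ~r W.edges := rotate_edges W a ha
  have hmemtail : ∀ x, x ∈ W₁.support.tail → x ∈ W.support := by
    intro x hx
    exact List.mem_of_mem_tail (hsuppperm.perm.mem_iff.mp hx)
  have hb1 : b ∈ W₁.support := by
    have hbt : b ∈ W.support.tail := mem_tail_support_of_closed W hWne hb
    exact List.mem_of_mem_tail (hsuppperm.perm.mem_iff.mpr hbt)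
  set P1 := W₁.takeUntil b hb1 with hP1def
  set P2 := W₁.dropUntil b hb1 with hP2def
  have hspec : P1.append P2 = W₁ := W₁.take_spec hb1
  have hsupp : P1.support ++ P2.support.tail = W₁.support := by
    rw [← hspec]; exact (support_append P1 P2).symm
  have hP1cons : P1.support = a :: P1.support.tail := support_eq_cons P1
  have hW₁cons : W₁.support = a :: W₁.support.tail := support_eq_cons W₁
  have htails : W₁.support.tail = P1.support.tail ++ P2.support.tail := by
    have h2 := hsupp
    rw [hP1cons, hW₁cons] at h2
    simpa only [List.cons_append, List.cons.injEq, true_and] using h2.symm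
  have hnd : W₁.support.tail.Nodup := hW₁.support_nodup
  have hdisj : List.Disjoint P1.support.tail P2.support.tail := by
    rw [htails] at hnd
    exact List.disjoint_of_nodup_append hnd
  obtain ⟨s1, hs1mem, hs1S⟩ := exists_S_of_walk hXS P1 haX (fun h => hXRd b h hbR)
  obtain ⟨s2, hs2mem, hs2S⟩ := exists_S_of_walk hRS P2 hbR (fun h => hXRd a haX h)
  have hs1tail : s1 ∈ P1.support.tail := by
    rcases (by rw [hP1cons] at hs1mem; exact List.mem_cons.mp hs1mem :
        s1 = a ∨ s1 ∈ P1.support.tail) with rfl | h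
    · exact absurd hs1S (hXSd _ haX)
    · exact h
  have hP2cons : P2.support = b :: P2.support.tail := support_eq_cons P2
  have hs2tail : s2 ∈ P2.support.tail := by
    rcases (by rw [hP2cons] at hs2mem; exact List.mem_cons.mp hs2mem :
        s2 = b ∨ s2 ∈ P2.support.tail) with rfl | h
    · exact absurd hs2S (hRSd _ hbR)
    · exact h
  have hne : s1 ≠ s2 := fun h => hdisj hs1tail (h ▸ hs2tail)
  refine ⟨s1, hmemtail _ (htails ▸ List.mem_append_left _ hs1tail),
          s2, hmemtail _ (htails ▸ List.mem_append_right _ hs2tail),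
          hs1S, hs2S, hne, ?_⟩
  intro hmem
  have hmem1 : s(s1, s2) ∈ W₁.edges := hedgesperm.perm.mem_iff.mpr hmem
  rw [← hspec, edges_append, List.mem_append] at hmem1
  rcases hmem1 with h1 | h2
  · have : s2 ∈ P1.support := snd_mem_support_of_mem_edges P1 h1
    rcases (by rw [hP1cons] at this; exact List.mem_cons.mp this :
        s2 = a ∨ s2 ∈ P1.support.tail) with rfl | h
    · exact hXSd _ haX hs2S
    · exact hdisj h hs2tail
  · have : s1 ∈ P2.support := fst_mem_support_of_mem_edges P2 h2
    rcases (by rw [hP2cons] at this; exact List.mem_cons.mp this :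
        s1 = b ∨ s1 ∈ P2.support.tail) with rfl | h
    · exact hRSd _ hbR hs1S
    · exact hdisj hs1tail h

variable {V' : Type u}
open SimpleGraph.Walk

/-- Transfer a walk along `≤`. -/
def walkLe {G G' : SimpleGraph V'} (h : G ≤ G') {a b : V'} (p : G.Walk a b) :
    G'.Walk a b :=
  p.transfer G' (fun e he => SimpleGraph.edgeSet_mono h (p.edges_subset_edgeSet he))

lemma support_walkLe {G G' : SimpleGraph V'} (h : G ≤ G') {a b : V'} (p : G.Walk a b) :
    (walkLe h p).support = p.support := Walk.support_transfer _ _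

lemma edges_walkLe {G G' : SimpleGraph V'} (h : G ≤ G') {a b : V'} (p : G.Walk a b) :
    (walkLe h p).edges = p.edges := Walk.edges_transfer _ _

lemma length_walkLe {G G' : SimpleGraph V'} (h : G ≤ G') {a b : V'} (p : G.Walk a b) :
    (walkLe h p).length = p.length := Walk.length_transfer _ _

lemma isCycle_walkLe {G G' : SimpleGraph V'} (h : G ≤ G') {a : V'} {p : G.Walk a a}
    (hp : p.IsCycle) : (walkLe h p).IsCycle := hp.transfer _

/-- L1: if `Ω` is a clique of a minimal triangulation `H'` of `H`, then any two
distinct vertices of `Ω` are connected in `H − (Ω \ {x,y})`. -/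
lemma completed {H H' : SimpleGraph V'} (hmt : IsMinimalTriangulation H H')
    {Ω : Set V'} (hcl : H'.IsClique Ω) {x y : V'} (hx : x ∈ Ω) (hy : y ∈ Ω)
    (hxy : x ≠ y) : AvoidReach H (Ω \ {x, y}) x y := by
  classical
  by_contra hnr
  obtain ⟨hle, hch, hmin⟩ := hmt
  set S : Set V' := Ω \ {x, y} with hSdef
  have hxS : x ∉ S := fun h => h.2 (by simp)
  have hyS : y ∉ S := fun h => h.2 (by simp)
  set CX : Set V' := {c | AvoidReach H S x c} with hCXdef
  have hxCX : x ∈ CX := ⟨Walk.nil, by simpa using hxS⟩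
  have hCXS : ∀ c ∈ CX, c ∉ S := by
    rintro c ⟨w, hw⟩
    exact hw c w.end_mem_support
  set R : Set V' := (CX ∪ S)ᶜ with hRdef
  have hyR : y ∈ R := by
    intro hmem
    rcases hmem with h | h
    · exact hnr h
    · exact hyS h
  -- closure of CX under H-edges
  have hHcl : ∀ ⦃u w : V'⦄, H.Adj u w → u ∈ CX → w ∈ CX ∨ w ∈ S := by
    rintro u w hadj ⟨p, hp⟩
    by_cases hwS : w ∈ S
    · exact Or.inr hwS
    · refine Or.inl ⟨p.concat hadj, ?_⟩
      intro t ht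
      rw [Walk.support_concat] at ht
      rcases (by simpa using ht : t ∈ p.support ∨ t = w) with h | rfl
      · exact hp t h
      · exact hwS
  -- the smaller triangulation F
  set F : SimpleGraph V' := {
    Adj := fun u w => H'.Adj u w ∧ ¬(u ∈ CX ∧ w ∈ R) ∧ ¬(u ∈ R ∧ w ∈ CX)
    symm := ⟨fun u w h => ⟨h.1.symm, fun hh => h.2.2 ⟨hh.2, hh.1⟩,
      fun hh => h.2.1 ⟨hh.2, hh.1⟩⟩⟩
    loopless := ⟨fun u h => H'.loopless.irrefl u h.1⟩ } with hFdef
  have hFadj : ∀ {u w : V'}, F.Adj u w ↔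
      (H'.Adj u w ∧ ¬(u ∈ CX ∧ w ∈ R) ∧ ¬(u ∈ R ∧ w ∈ CX)) := Iff.rfl
  have hHF : H ≤ F := by
    intro u w hadj
    refine ⟨hle hadj, ?_, ?_⟩
    · rintro ⟨hu, hw⟩
      rcases hHcl hadj hu with h | h
      · exact hw (Or.inl h)
      · exact hw (Or.inr h)
    · rintro ⟨hu, hw⟩
      rcases hHcl hadj.symm hw with h | h
      · exact hu (Or.inl h)
      · exact hu (Or.inr h)
  have hFH' : F ≤ H' := fun u w h => h.1
  have hFne : F < H' := by
    refine lt_of_le_of_ne hFH' (fun heq => ?_)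
    have hadj : H'.Adj x y := hcl hx hy hxy
    have : F.Adj x y := heq ▸ hadj
    exact this.2.1 ⟨hxCX, hyR⟩
  -- partition facts
  have hXSd : ∀ t ∈ CX, t ∉ S := hCXS
  have hRSd : ∀ t ∈ R, t ∉ S := fun t ht hs => ht (Or.inr hs)
  have hXRd : ∀ t ∈ CX, t ∉ R := fun t ht hr => hr (Or.inl ht)
  have hXS : ∀ ⦃u w : V'⦄, F.Adj u w → u ∈ CX → w ∈ CX ∨ w ∈ S := by
    intro u w hadj hu
    by_contra hcon
    push_neg at hcon
    exact hadj.2.1 ⟨hu, fun h => (h.elim (fun h' => hcon.1 h') (fun h' => hcon.2 h'))⟩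
  have hRS : ∀ ⦃u w : V'⦄, F.Adj u w → u ∈ R → w ∈ R ∨ w ∈ S := by
    intro u w hadj hu
    by_contra hcon
    push_neg at hcon
    have hw : w ∈ CX ∪ S := Set.notMem_compl_iff.mp hcon.1
    rcases hw with h | h
    · exact hadj.2.2 ⟨hu, h⟩
    · exact hcon.2 h
  -- F is chordal
  have hFch : IsChordalG F := by
    intro v w hw hlen
    have hW' : (walkLe hFH' w).IsCycle := isCycle_walkLe hFH' hw
    have hlen' : 4 ≤ (walkLe hFH' w).length := by rwa [length_walkLe]
    obtain ⟨c, hc, d, hd, hcd, hce⟩ := hch v (walkLe hFH' w) hW' hlen'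
    rw [support_walkLe] at hc hd
    rw [edges_walkLe] at hce
    by_cases hcross : (c ∈ CX ∧ d ∈ R) ∨ (c ∈ R ∧ d ∈ CX)
    · have harc : ∃ s1 ∈ w.support, ∃ s2 ∈ w.support, s1 ∈ S ∧ s2 ∈ S ∧ s1 ≠ s2 ∧
          s(s1, s2) ∉ w.edges := by
        rcases hcross with ⟨hcX, hdR⟩ | ⟨hcR, hdX⟩
        · exact arc w hw hXS hRS hXSd hRSd hXRd hc hd hcX hdR
        · exact arc w hw hXS hRS hXSd hRSd hXRd hd hc hdX hcR
      obtain ⟨s1, h1, s2, h2, hS1, hS2, hne, hnedge⟩ := harc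
      refine ⟨s1, h1, s2, h2, ⟨hcl hS1.1 hS2.1 hne, ?_, ?_⟩, hnedge⟩
      · exact fun h => hCXS s1 h.1 hS1
      · exact fun h => hRSd s1 h.1 hS1
    · obtain ⟨h1, h2⟩ := not_or.mp hcross
      exact ⟨c, hc, d, hd, ⟨hcd, h1, h2⟩, hce⟩
  exact hmin F hHF hFne hFch

lemma one_le_length_of_ne {F : SimpleGraph V'} {x y : V'} (h : x ≠ y)
    (p : F.Walk x y) : 1 ≤ p.length := by
  rcases Nat.eq_zero_or_pos p.length with h0 | h1
  · exact absurd (Walk.eq_of_length_eq_zero h0) h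
  · exact h1

lemma edge_of_length_one {F : SimpleGraph V'} {x y : V'} (p : F.Walk x y)
    (h : p.length = 1) : s(x, y) ∈ p.edges := by
  cases p with
  | nil => simp at h
  | cons hadj p' =>
    have : p'.length = 0 := by simpa using h
    have heq := Walk.eq_of_length_eq_zero this
    subst heq
    simp

/-- last vertex adjacent to `s` along a walk. -/
lemma lastAdj {F : SimpleGraph V'} {s : V'} : ∀ {a t : V'} (w : F.Walk a t),
    ¬F.Adj s t →
    (∀ x ∈ w.support, ¬F.Adj s x) ∨
      ∃ (q : V') (w₁ : F.Walk a q) (w₂ : F.Walk q t),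
        w = w₁.append w₂ ∧ F.Adj s q ∧ ∀ x ∈ w₂.support, x ≠ q → ¬F.Adj s x := by
  intro a t w
  induction w with
  | nil =>
    intro hst
    left
    intro x hx
    rcases (by simpa using hx : x = _) with rfl
    exact hst
  | @cons a b t h p ih =>
    intro hst
    rcases ih hst with hnone | ⟨q, w₁, w₂, heq, hadj, hlast⟩
    · by_cases hsa : F.Adj s a
      · right
        refine ⟨a, Walk.nil, Walk.cons h p, rfl, hsa, ?_⟩
        intro x hx hxa
        rcases (by simpa using hx : x = a ∨ x ∈ p.support) with rfl | hxp
        · exact absurd rfl hxa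
        · exact hnone x hxp
      · left
        intro x hx
        rcases (by simpa using hx : x = a ∨ x ∈ p.support) with rfl | hxp
        · exact hsa
        · exact hnone x hxp
    · right
      exact ⟨q, Walk.cons h w₁, w₂, by rw [heq, Walk.cons_append], hadj, hlast⟩

lemma cliqueComp {F : SimpleGraph V'} (hch : IsChordalG F) {C : Set V'}
    (hconn : ∀ a ∈ C, ∀ b ∈ C, ∃ w : F.Walk a b, ∀ x ∈ w.support, x ∈ C)
    (hCne : C.Nonempty) :
    ∀ {K : Set V'}, K.Finite → (∀ s ∈ K, s ∉ C) → F.IsClique K →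
      (∀ s ∈ K, ∃ c ∈ C, F.Adj s c) → ∃ c ∈ C, ∀ s ∈ K, F.Adj s c := by
  intro K hKfin
  refine Set.Finite.induction_on (motive := fun K _ => (∀ s ∈ K, s ∉ C) → F.IsClique K →
      (∀ s ∈ K, ∃ c ∈ C, F.Adj s c) → ∃ c ∈ C, ∀ s ∈ K, F.Adj s c) K hKfin ?_ ?_
  · intro _ _ _
    obtain ⟨c, hc⟩ := hCne
    exact ⟨c, hc, by simp⟩
  · rintro k K₀ hkK₀ hK₀fin ih hdisj hK hN
    classical
    obtain ⟨c₀, hc₀C, hc₀all⟩ := ih (fun x hx => hdisj x (Set.mem_insert_of_mem _ hx))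
      (hK.subset (Set.subset_insert _ _))
      (fun x hx => hN x (Set.mem_insert_of_mem _ hx))
    obtain ⟨c₁, hc₁C, hkc₁⟩ := hN k (Set.mem_insert _ _)
    have hkC : k ∉ C := hdisj k (Set.mem_insert _ _)
    -- minimal-length walk from c₀ inside C to a neighbour of k
    set P : ℕ → Prop := fun n => ∃ (t : V') (w : F.Walk c₀ t),
      (∀ x ∈ w.support, x ∈ C) ∧ F.Adj k t ∧ w.length = n with hPdef
    have hPne : ∃ n, P n := by
      obtain ⟨w, hw⟩ := hconn c₀ hc₀C c₁ hc₁C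
      exact ⟨w.length, c₁, w, hw, hkc₁, rfl⟩
    obtain ⟨t, w0, hw0C, hkt, hw0len⟩ := Nat.find_spec hPne
    set w := w0.bypass with hwdef
    have hwpath : w.IsPath := Walk.bypass_isPath w0
    have hwC : ∀ x ∈ w.support, x ∈ C :=
      fun x hx => hw0C x (Walk.support_bypass_subset w0 hx)
    have hminw : ∀ (t' : V') (w' : F.Walk c₀ t'),
        (∀ x ∈ w'.support, x ∈ C) → F.Adj k t' → w.length ≤ w'.length := by
      intro t' w' hC' hadj'
      calc w.length ≤ w0.length := Walk.length_bypass_le w0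
        _ = Nat.find hPne := hw0len
        _ ≤ w'.length := Nat.find_min' hPne ⟨t', w', hC', hadj', rfl⟩
    have htC : t ∈ C := hwC t w.end_mem_support
    -- no interior vertex of w is adjacent to k
    have htnbr : ∀ x ∈ w.support, x ≠ t → ¬F.Adj k x := by
      intro x hx hxt hadjx
      have hlt : (w.takeUntil x hx).length < w.length := by
        have hsum := congrArg Walk.length (w.take_spec hx)
        rw [Walk.length_append] at hsum
        have hd1 : 1 ≤ (w.dropUntil x hx).length :=
          one_le_length_of_ne hxt (w.dropUntil x hx)
        omega
      exact absurd (hminw x (w.takeUntil x hx)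
        (fun z hz => hwC z (Walk.support_takeUntil_subset w hx hz)) hadjx)
        (by omega)
    -- w has no shortcuts
    have hshort : ∀ x y, x ∈ w.support → y ∈ w.support → F.Adj x y →
        s(x, y) ∈ w.edges := by
      intro x y hx hy hadj
      by_contra hne
      have hxyne : x ≠ y := hadj.ne
      have hsum := congrArg Walk.length (w.take_spec hx)
      rw [Walk.length_append] at hsum
      by_cases hyd : y ∈ (w.dropUntil x hx).support
      · have hsum2 := congrArg Walk.length ((w.dropUntil x hx).take_spec hyd)
        rw [Walk.length_append] at hsum2
        have hseg : 2 ≤ ((w.dropUntil x hx).takeUntil y hyd).length := by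
          rcases Nat.lt_or_ge ((w.dropUntil x hx).takeUntil y hyd).length 2 with hl | hl
          · interval_cases hseglen : ((w.dropUntil x hx).takeUntil y hyd).length
            · exact absurd (Walk.eq_of_length_eq_zero hseglen) hxyne
            · exact absurd (Walk.edges_dropUntil_subset w hx
                (Walk.edges_takeUntil_subset _ hyd
                  (edge_of_length_one _ hseglen))) hne
          · exact hl
        have hvalid := hminw t
          ((w.takeUntil x hx).append (Walk.cons hadj ((w.dropUntil x hx).dropUntil y hyd)))
          (by
            intro z hz
            rw [Walk.mem_support_append_iff] at hz
            rcases hz with hz | hz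
            · exact hwC z (Walk.support_takeUntil_subset w hx hz)
            · rcases (by simpa using hz : z = x ∨ z ∈ ((w.dropUntil x hx).dropUntil y hyd).support)
                with rfl | hz'
              · exact hwC z hx
              · exact hwC z (Walk.support_dropUntil_subset w hx
                  (Walk.support_dropUntil_subset _ hyd hz')))
          hkt
        rw [Walk.length_append, Walk.length_cons] at hvalid
        omega
      · have hyw1 : y ∈ (w.takeUntil x hx).support := by
          have := hy
          rw [← w.take_spec hx, Walk.mem_support_append_iff] at this
          rcases this with h | h
          · exact h
          · exact absurd h hyd
        have hsum2 := congrArg Walk.length ((w.takeUntil x hx).take_spec hyw1)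
        rw [Walk.length_append] at hsum2
        have hseg : 2 ≤ ((w.takeUntil x hx).dropUntil y hyw1).length := by
          rcases Nat.lt_or_ge ((w.takeUntil x hx).dropUntil y hyw1).length 2 with hl | hl
          · interval_cases hseglen : ((w.takeUntil x hx).dropUntil y hyw1).length
            · exact absurd (Walk.eq_of_length_eq_zero hseglen).symm hxyne
            · have : s(y, x) ∈ w.edges := Walk.edges_takeUntil_subset w hx
                (Walk.edges_dropUntil_subset _ hyw1 (edge_of_length_one _ hseglen))
              rw [Sym2.eq_swap] at this
              exact absurd this hne
          · exact hl
        have hvalid := hminw t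
          (((w.takeUntil x hx).takeUntil y hyw1).append
            (Walk.cons hadj.symm (w.dropUntil x hx)))
          (by
            intro z hz
            rw [Walk.mem_support_append_iff] at hz
            rcases hz with hz | hz
            · exact hwC z (Walk.support_takeUntil_subset w hx
                (Walk.support_takeUntil_subset _ hyw1 hz))
            · rcases (by simpa using hz : z = y ∨ z ∈ (w.dropUntil x hx).support)
                with rfl | hz'
              · exact hwC z hy
              · exact hwC z (Walk.support_dropUntil_subset w hx hz'))
          hkt
        rw [Walk.length_append, Walk.length_cons] at hvalid
        omega
    by_cases hall : ∀ s ∈ K₀, F.Adj s t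
    · refine ⟨t, htC, ?_⟩
      intro s hs
      rcases Set.mem_insert_iff.mp hs with rfl | hs'
      · exact hkt
      · exact hall s hs'
    · push_neg at hall
      obtain ⟨s, hsK₀, hnst⟩ := hall
      exfalso
      have hsc₀ : F.Adj s c₀ := hc₀all s hsK₀
      have hsC : s ∉ C := hdisj s (Set.mem_insert_of_mem _ hsK₀)
      have hsnek : s ≠ k := fun h => hkK₀ (h ▸ hsK₀)
      rcases lastAdj w hnst with hnone | ⟨q, w₁, pw, heq, hsq, hlast⟩
      · exact hnone c₀ w.start_mem_support hsc₀
      · have hpwsub : ∀ x ∈ pw.support, x ∈ w.support := by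
          intro x hx
          rw [heq, Walk.mem_support_append_iff]
          exact Or.inr hx
        have hpwC : ∀ x ∈ pw.support, x ∈ C := fun x hx => hwC x (hpwsub x hx)
        have hpwedges : ∀ e ∈ pw.edges, e ∈ w.edges := by
          intro e he
          rw [heq, Walk.edges_append]
          exact List.mem_append_right _ he
        have hwnodup : w.support.Nodup := hwpath.support_nodup
        have hdecomp : w.support = w₁.support ++ pw.support.tail := by
          rw [heq]; exact Walk.support_append w₁ pw
        have hnd2 : w₁.support.Nodup ∧ pw.support.tail.Nodup ∧
            w₁.support.Disjoint pw.support.tail := by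
          rw [hdecomp, List.nodup_append] at hwnodup
          exact ⟨hwnodup.1, hwnodup.2.1, by intro x hx hy; exact hwnodup.2.2 x hx x hy rfl⟩
        have hw1pw : ∀ z, z ∈ w₁.support → z ∈ pw.support → z = q := by
          intro z h1 h2
          rcases (by rw [Walk.support_eq_cons pw] at h2; exact List.mem_cons.mp h2 :
              z = q ∨ z ∈ pw.support.tail) with rfl | h3
          · rfl
          · exact absurd h3 (hnd2.2.2 h1)
        have hpwnodup : pw.support.Nodup := by
          rw [Walk.support_eq_cons pw, List.nodup_cons]
          refine ⟨fun hq => ?_, hnd2.2.1⟩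
          exact hnd2.2.2 w₁.end_mem_support hq
        have hqC : q ∈ C := hpwC q pw.start_mem_support
        have hqnet : q ≠ t := fun h => hnst (h ▸ hsq)
        have hadjks : F.Adj k s := hK (Set.mem_insert _ _)
          (Set.mem_insert_of_mem _ hsK₀) hsnek.symm
        -- the cycle
        set P2 : F.Walk t s := Walk.cons hkt.symm (Walk.cons hadjks Walk.nil) with hP2def
        set Pc : F.Walk q s := pw.append P2 with hPcdef
        have hPsupp : Pc.support = pw.support ++ [k, s] := by
          rw [hPcdef, Walk.support_append, hP2def]
          simp
        have hPedges : Pc.edges = pw.edges ++ [s(t, k), s(k, s)] := by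
          rw [hPcdef, Walk.edges_append, hP2def]
          simp
        have hPpath : Pc.IsPath := by
          rw [Walk.isPath_def, hPsupp, List.nodup_append]
          refine ⟨hpwnodup, by simp [hsnek.symm], ?_⟩
          intro z hz
          have hzC := hpwC z hz
          intro b hb hzb
          subst hzb
          rcases List.mem_cons.mp hb with rfl | hb'
          · exact hkC hzC
          · rcases List.mem_cons.mp hb' with rfl | h
            · exact hsC hzC
            · simp at h
        have hsqP : s(s, q) ∉ Pc.edges := by
          rw [hPedges]
          intro hmem
          rcases List.mem_append.mp hmem with h | h
          · exact hsC (hpwC s (pw.fst_mem_support_of_mem_edges h))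
          · rcases (by simpa using h :
                (s = t ∧ q = k ∨ s = k ∧ q = t) ∨ s = k ∧ q = s ∨ q = k) with
              (⟨rfl, _⟩ | ⟨rfl, _⟩) | (⟨rfl, _⟩ | rfl)
            · exact hsC htC
            · exact hsnek rfl
            · exact hsnek rfl
            · exact hkC hqC
        set Wc : F.Walk s s := Walk.cons hsq Pc with hWcdef
        have hWccyc : Wc.IsCycle := (Walk.cons_isCycle_iff Pc hsq).mpr ⟨hPpath, hsqP⟩
        have hpwlen : 1 ≤ pw.length := one_le_length_of_ne hqnet pw
        have hWclen : 4 ≤ Wc.length := by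
          rw [hWcdef, Walk.length_cons, hPcdef, Walk.length_append, hP2def]
          simp only [Walk.length_cons, Walk.length_nil]
          omega
        obtain ⟨cx, hcx, cy, hcy, hadjxy, hnotin⟩ := hch s Wc hWccyc hWclen
        have hWcsupp : ∀ u, u ∈ Wc.support → u = s ∨ u ∈ pw.support ∨ u = k := by
          intro u hu
          rw [hWcdef, Walk.support_cons, hPsupp] at hu
          rcases (by simpa using hu) with h | h | h | h
          · exact Or.inl h
          · exact Or.inr (Or.inl h)
          · exact Or.inr (Or.inr h)
          · exact Or.inl h
        have hWcedges : Wc.edges = s(s, q) :: (pw.edges ++ [s(t, k), s(k, s)]) := by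
          rw [hWcdef, Walk.edges_cons, hPedges]
        -- chord elimination
        have hkill : ∀ u v, u = s ∨ u ∈ pw.support ∨ u = k →
            v = s ∨ v ∈ pw.support ∨ v = k → F.Adj u v → s(u, v) ∉ Wc.edges → False := by
          have hcase : ∀ u, u ∈ pw.support → F.Adj s u → s(s, u) ∉ Wc.edges → False := by
            intro u hu hadj hne
            by_cases huq : u = q
            · subst huq
              exact hne (by rw [hWcedges]; simp)
            · exact hlast u hu huq hadj
          have hcasek : ∀ u, u ∈ pw.support → F.Adj u k → s(u, k) ∉ Wc.edges → False := by
            intro u hu hadj hne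
            by_cases hut : u = t
            · subst hut
              exact hne (by rw [hWcedges]; simp)
            · exact htnbr u (hpwsub u hu) hut hadj.symm
          rintro u v (rfl | hu | rfl) (rfl | hv | rfl) hadj hne
          · exact hadj.ne rfl
          · exact hcase v hv hadj hne
          · exact hne (by rw [hWcedges, Sym2.eq_swap]; simp)
          · exact hcase u hu hadj.symm (by rwa [Sym2.eq_swap])
          · -- both on pw
            have hins : s(u, v) ∈ w.edges :=
              hshort u v (hpwsub u hu) (hpwsub v hv) hadj
            have : s(u, v) ∈ pw.edges := by
              rw [heq, Walk.edges_append] at hins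
              rcases List.mem_append.mp hins with h | h
              · have hu1 : u ∈ w₁.support := w₁.fst_mem_support_of_mem_edges h
                have hv1 : v ∈ w₁.support := w₁.snd_mem_support_of_mem_edges h
                have huq := hw1pw u hu1 hu
                have hvq := hw1pw v hv1 hv
                exact (hadj.ne (huq.trans hvq.symm)).elim
              · exact h
            exact hne (by rw [hWcedges]; simp [this])
          · exact hcasek u hu hadj hne
          · exact hne (by rw [hWcedges]; simp)
          · exact hcasek v hv hadj.symm (by rwa [Sym2.eq_swap])
          · exact hadj.ne rfl
        exact hkill cx cy (hWcsupp cx hcx) (hWcsupp cy hcy) hadjxy hnotin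

section Lift
variable {α β : Type u} {A : SimpleGraph α} {B : SimpleGraph β}

lemma liftWalk (f : A →g B) (hinj : Function.Injective f) :
    ∀ {x y : β} (w : B.Walk x y), (∀ z ∈ w.support, z ∈ Set.range f) →
    (∀ ⦃p q : α⦄, B.Adj (f p) (f q) → A.Adj p q) →
    ∀ {p q : α} (hp : x = f p) (hq : y = f q),
      ∃ w' : A.Walk p q, w'.map f = w.copy hp hq := by
  intro x y w
  induction w with
  | nil =>
    intro _ _ p q hp hq
    subst hp
    have : p = q := hinj hq
    subst this
    have : hq = rfl := rfl
    subst this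
    exact ⟨Walk.nil, by simp⟩
  | @cons x m y h w2 ih =>
    intro hsupp hback p q hp hq
    subst hp
    subst hq
    obtain ⟨p', hp'⟩ := hsupp m (by simp)
    subst hp'
    have hadj : A.Adj p p' := hback h
    obtain ⟨w2', hw2'⟩ := ih (fun z hz => hsupp z (by simp [hz])) hback rfl rfl
    rw [Walk.copy_rfl_rfl] at hw2'
    refine ⟨Walk.cons hadj w2', ?_⟩
    rw [Walk.copy_rfl_rfl, Walk.map_cons, hw2']
end Lift

section Expand
variable {k : ℕ} {V : Fin k → Type u} (G : SimpleGraph (Fin k)) (M : ∀ i, SimpleGraph (V i))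

lemma expand_adj_same {i : Fin k} {p q : V i} :
    (expandG G M).Adj ⟨i, p⟩ ⟨i, q⟩ ↔ (M i).Adj p q := by
  rw [expandG, SimpleGraph.fromRel_adj]
  constructor
  · rintro ⟨hne, (⟨h', hadj⟩ | ⟨hne', _⟩) | (⟨h', hadj⟩ | ⟨hne', _⟩)⟩
    · exact hadj
    · exact absurd rfl hne'
    · exact hadj.symm
    · exact absurd rfl hne'
  · intro h
    refine ⟨fun he => h.ne (by simpa using he), Or.inl (Or.inl ⟨rfl, h⟩)⟩

lemma expand_adj_cross {a b : Σ j, V j} (hne : a.1 ≠ b.1) :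
    (expandG G M).Adj a b ↔ G.Adj a.1 b.1 := by
  rw [expandG, SimpleGraph.fromRel_adj]
  constructor
  · rintro ⟨hab, (⟨h', _⟩ | ⟨_, hG⟩) | (⟨h', _⟩ | ⟨_, hG⟩)⟩
    · exact absurd h' hne
    · exact hG
    · exact absurd h'.symm hne
    · exact hG.symm
  · intro h
    exact ⟨fun he => hne (congrArg Sigma.fst he), Or.inl (Or.inr ⟨hne, h⟩)⟩
end Expand


lemma sigma_eq_mk {ι : Type*} {W : ι → Type u} {i : ι} {x : Σ j, W j} (h : x.1 = i) :
    ∃ p : W i, x = ⟨i, p⟩ := by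
  obtain ⟨j, q⟩ := x
  subst h
  exact ⟨q, rfl⟩

section Reroute
variable {k : ℕ} {V : Fin k → Type u} (G : SimpleGraph (Fin k)) (M : ∀ i, SimpleGraph (V i))

lemma reroute (i : Fin k) (Ω : Set (Σ j, V j)) :
    ∀ {a yy : Σ j, V j} (w : (expandG G M).Walk a yy), a.1 ≠ i → yy.1 = i →
      w.support.Nodup → (∀ v ∈ w.support, v = a ∨ v = yy ∨ v ∉ Ω) →
      ∃ (d : Σ j, V j) (w' : (expandG G M).Walk a d), d.1 ≠ i ∧ G.Adj d.1 i ∧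
        (∀ v ∈ w'.support, v ∈ w.support) ∧ w'.support.Nodup ∧
        (∀ v ∈ w'.support, v.1 ≠ i) ∧ (∀ v ∈ w'.support, v = a ∨ v ∉ Ω) := by
  intro a yy w
  induction w with
  | nil =>
    intro ha hy _ _
    exact absurd hy ha
  | @cons a b yy h p ih =>
    intro ha hy hnodup hcond
    by_cases hb : b.1 = i
    · have hGa : G.Adj a.1 i := by
        have := (expand_adj_cross G M (show a.1 ≠ b.1 by rw [hb]; exact ha)).mp h
        rwa [hb] at this
      refine ⟨a, Walk.nil, ha, hGa, by simp, by simp, by simp [ha], by simp⟩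
    · have hnodup' : p.support.Nodup := by
        rw [Walk.support_cons] at hnodup
        exact hnodup.of_cons
      have hanotp : a ∉ p.support := by
        rw [Walk.support_cons] at hnodup
        exact (List.nodup_cons.mp hnodup).1
      have hbΩ : b ∉ Ω := by
        rcases hcond b (by simp) with hba | hby | hbn
        · exact absurd hba.symm h.ne
        · exact absurd (hby ▸ hy) hb
        · exact hbn
      obtain ⟨d, w', hd1, hd2, hsub, hnd, hni, hΩ'⟩ := ih hb hy hnodup'
        (fun v hv => by
          rcases hcond v (by simp [hv]) with rfl | hvy | hvn
          · exact absurd hv hanotp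
          · exact Or.inr (Or.inl hvy)
          · exact Or.inr (Or.inr hvn))
      refine ⟨d, Walk.cons h w', hd1, hd2, ?_, ?_, ?_, ?_⟩
      · intro v hv
        rcases (by simpa using hv : v = a ∨ v ∈ w'.support) with rfl | hv'
        · simp
        · simp [hsub v hv']
      · rw [Walk.support_cons, List.nodup_cons]
        exact ⟨fun hmem => hanotp (hsub a hmem), hnd⟩
      · intro v hv
        rcases (by simpa using hv : v = a ∨ v ∈ w'.support) with rfl | hv'
        · exact ha
        · exact hni v hv'
      · intro v hv
        rcases (by simpa using hv : v = a ∨ v ∈ w'.support) with rfl | hv'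
        · exact Or.inl rfl
        · rcases hΩ' v hv' with rfl | hvn
          · exact Or.inr hbΩ
          · exact Or.inr hvn
end Reroute
end Aux

theorem statement_12 {k : ℕ} {V : Fin k → Type} [∀ i, Fintype (V i)]
    (G : SimpleGraph (Fin k)) (M : ∀ i, SimpleGraph (V i))
    (Ω : Set (Σ i, V i)) (hΩ : IsPMC (expandG G M) Ω)
    (i : Fin k) (hint : (Ω ∩ modSet i).Nonempty) (hnsub : ¬ modSet i ⊆ Ω) :
    IsPMC (M i) (Sigma.mk i ⁻¹' Ω) ∧
      Ω \ modSet i = setNbhd (expandG G M) (modSet i) := by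
  classical
  obtain ⟨H', ⟨hle, hch, hmin⟩, hclique, hmax⟩ := hΩ
  set H := expandG G M with hHdef
  obtain ⟨y₀, hy₀Ω, hy₀mod⟩ := hint
  have hy₀1 : y₀.1 = i := hy₀mod
  obtain ⟨z, hzmod, hzΩ⟩ := Set.not_subset.mp hnsub
  have hz1 : z.1 = i := hzmod
  -- cross adjacency helpers
  have hadj_cross : ∀ {a b : Σ j, V j}, a.1 ≠ i → b.1 = i → G.Adj a.1 i → H.Adj a b := by
    intro a b h1 h2 h3
    rw [hHdef, Aux.expand_adj_cross G M (show a.1 ≠ b.1 by rw [h2]; exact h1), h2]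
    exact h3
  have hcross_adj : ∀ {a b : Σ j, V j}, a.1 ≠ i → b.1 = i → H.Adj a b → G.Adj a.1 i := by
    intro a b h1 h2 hadj
    have := (Aux.expand_adj_cross G M (show a.1 ≠ b.1 by rw [h2]; exact h1)).mp hadj
    rwa [h2] at this
  -- the component of z in H − Ω
  set Czs : Set (Σ j, V j) := {c | ∃ w : H.Walk z c, ∀ v ∈ w.support, v ∉ Ω}
    with hCzsdef
  have hzCzs : z ∈ Czs := ⟨Walk.nil, by simpa using hzΩ⟩
  have hCzsΩ : ∀ c ∈ Czs, c ∉ Ω := by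
    rintro c ⟨w, hw⟩
    exact hw c w.end_mem_support
  have hCzsconn : ∀ a ∈ Czs, ∀ b ∈ Czs,
      ∃ w : H'.Walk a b, ∀ x ∈ w.support, x ∈ Czs := by
    rintro a ⟨wa, hwa⟩ b ⟨wb, hwb⟩
    refine ⟨Aux.walkLe hle (wa.reverse.append wb), ?_⟩
    intro x hx
    rw [Aux.support_walkLe, Walk.mem_support_append_iff] at hx
    rcases hx with hx | hx
    · rw [Walk.support_reverse, List.mem_reverse] at hx
      exact ⟨wa.takeUntil x hx, fun v hv => hwa v (Walk.support_takeUntil_subset wa hx hv)⟩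
    · exact ⟨wb.takeUntil x hx, fun v hv => hwb v (Walk.support_takeUntil_subset wb hx hv)⟩
  -- L1
  have hcompl : ∀ x yy, x ∈ Ω → yy ∈ Ω → x ≠ yy → AvoidReach H (Ω \ {x, yy}) x yy :=
    fun x yy hx hy hxy => Aux.completed ⟨hle, hch, hmin⟩ hclique hx hy hxy
  -- Claim A (+A')
  have hclaimA : ∀ x, x ∈ Ω → x.1 ≠ i →
      (∃ c ∈ Czs, H.Adj x c) ∧
        (¬G.Adj x.1 i → ∃ d ∈ Czs, d.1 ≠ i ∧ G.Adj d.1 i) := by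
    intro x hxΩ hx1
    by_cases hGx : G.Adj x.1 i
    · exact ⟨⟨z, hzCzs, hadj_cross hx1 hz1 hGx⟩, fun h => absurd hGx h⟩
    · have hxy : x ≠ y₀ := fun h => hx1 (h ▸ hy₀1)
      obtain ⟨w0, hw0⟩ := hcompl x y₀ hxΩ hy₀Ω hxy
      have hpcond : ∀ v ∈ w0.bypass.support, v = x ∨ v = y₀ ∨ v ∉ Ω := by
        intro v hv
        have hmem := hw0 v (Walk.support_bypass_subset _ hv)
        by_cases hvΩ : v ∈ Ω
        · rcases (by_contra fun hc => hmem ⟨hvΩ, fun hins => hc (by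
            rcases hins with h | h
            · exact absurd (Or.inl h) hc
            · exact absurd (Or.inr h) hc)⟩ : v ∈ ({x, y₀} : Set _)) with h | h
          · exact Or.inl h
          · exact Or.inr (Or.inl h)
        · exact Or.inr (Or.inr hvΩ)
      obtain ⟨d, w', hd1, hd2, hsub, hnd, hni, hΩ'⟩ :=
        Aux.reroute G M i Ω w0.bypass hx1 hy₀1 (Walk.bypass_isPath w0).support_nodup
          hpcond
      have hdnex : d ≠ x := fun h => hGx (h ▸ hd2)
      have hdΩ : d ∉ Ω := by
        rcases hΩ' d w'.end_mem_support with h | h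
        · exact absurd h hdnex
        · exact h
      have hzdadj : H.Adj z d := (hadj_cross hd1 hz1 hd2).symm
      have hdCzs : d ∈ Czs := ⟨Walk.cons hzdadj Walk.nil, by
        intro v hv
        rcases (by simpa using hv : v = z ∨ v = d) with rfl | rfl
        · exact hzΩ
        · exact hdΩ⟩
      refine ⟨?_, fun _ => ⟨d, hdCzs, hd1, hd2⟩⟩
      cases w' with
      | nil => exact absurd rfl hdnex
      | @cons _ c _ hxc wrest =>
        have hxnotrest : x ∉ wrest.support := by
          rw [Walk.support_cons, List.nodup_cons] at hnd
          exact hnd.1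
        refine ⟨c, ⟨Walk.cons hzdadj wrest.reverse, ?_⟩, hxc⟩
        intro v hv
        rcases (by simpa [Walk.support_reverse] using hv :
            v = z ∨ v ∈ wrest.support) with rfl | hv'
        · exact hzΩ
        · rcases hΩ' v (by simp [hv']) with rfl | h
          · exact absurd hv' hxnotrest
          · exact h
  -- contradiction machine
  have hcontr : ¬(∀ ω ∈ Ω, ∃ c ∈ Czs, H'.Adj ω c) := by
    intro hall
    obtain ⟨c, hcC, hcall⟩ := Aux.cliqueComp hch hCzsconn ⟨z, hzCzs⟩
      (Set.toFinite Ω) (fun s hs hsC => hCzsΩ s hsC hs) hclique hall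
    have hcnotΩ : c ∉ Ω := hCzsΩ c hcC
    have hclique2 : H'.IsClique (insert c Ω) := by
      intro u hu v hv huv
      rcases Set.mem_insert_iff.mp hu with rfl | huΩ <;>
        rcases Set.mem_insert_iff.mp hv with rfl | hvΩ
      · exact absurd rfl huv
      · exact (hcall v hvΩ).symm
      · exact hcall u huΩ
      · exact hclique huΩ hvΩ huv
    have heq := hmax (insert c Ω) hclique2 (Set.subset_insert c Ω)
    exact hcnotΩ (heq ▸ Set.mem_insert c Ω)
  -- Claim B
  have hclaimB : ∀ x, x ∈ Ω → x.1 ≠ i → G.Adj x.1 i := by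
    intro x hx hx1
    by_contra hGx
    obtain ⟨d, hdC, hd1, hd2⟩ := (hclaimA x hx hx1).2 hGx
    apply hcontr
    intro ω hω
    by_cases hω1 : ω.1 = i
    · exact ⟨d, hdC, hle (hadj_cross hd1 hω1 hd2).symm⟩
    · obtain ⟨c, hcC, hadj⟩ := (hclaimA ω hω hω1).1
      exact ⟨c, hcC, hle hadj⟩
  -- Claim C
  have hclaimC : ∀ x : Σ j, V j, x.1 ≠ i → G.Adj x.1 i → x ∈ Ω := by
    intro x hx1 hGx
    by_contra hxΩ
    have hxC : x ∈ Czs := ⟨Walk.cons (hadj_cross hx1 hz1 hGx).symm Walk.nil, by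
      intro v hv
      rcases (by simpa using hv : v = z ∨ v = x) with rfl | rfl
      · exact hzΩ
      · exact hxΩ⟩
    apply hcontr
    intro ω hω
    by_cases hω1 : ω.1 = i
    · exact ⟨x, hxC, hle (hadj_cross hx1 hω1 hGx).symm⟩
    · obtain ⟨c, hcC, hadj⟩ := (hclaimA ω hω hω1).1
      exact ⟨c, hcC, hle hadj⟩
  -- Goal 2
  have hgoal2 : Ω \ modSet i = setNbhd H (modSet i) := by
    ext u
    constructor
    · rintro ⟨huΩ, humod⟩
      have hu1 : u.1 ≠ i := humod
      exact ⟨humod, y₀, hy₀mod, hadj_cross hu1 hy₀1 (hclaimB u huΩ hu1)⟩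
    · rintro ⟨humod, a, hamod, hadj⟩
      have hu1 : u.1 ≠ i := humod
      have hGa : G.Adj u.1 i := by
        have := (Aux.expand_adj_cross G M
          (show u.1 ≠ a.1 by rw [(hamod : a.1 = i)]; exact hu1)).mp hadj
        rwa [(hamod : a.1 = i)] at this
      exact ⟨hclaimC u hu1 hGa, humod⟩
  refine ⟨?_, hgoal2⟩
  -- Goal 1
  have hinj : Function.Injective (Sigma.mk i : V i → Σ j, V j) := sigma_mk_injective
  set F' : SimpleGraph (V i) :=
    { Adj := fun p q => H'.Adj ⟨i, p⟩ ⟨i, q⟩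
      symm := ⟨fun p q h => h.symm⟩
      loopless := ⟨fun p h => H'.loopless.irrefl _ h⟩ } with hF'def
  have hF'adj : ∀ {p q : V i}, F'.Adj p q ↔ H'.Adj ⟨i, p⟩ ⟨i, q⟩ := Iff.rfl
  have hMF' : M i ≤ F' := fun p q h => hle ((Aux.expand_adj_same G M).mpr h)
  let homF : F' →g H' := ⟨Sigma.mk i, fun {p q} h => h⟩
  have hinjF : Function.Injective ⇑homF := hinj
  -- chordality of F'
  have hF'ch : IsChordalG F' := by
    intro v w hw hlen
    have hwm : (w.map homF).IsCycle := (Walk.map_isCycle_iff_of_injective hinjF).mpr hw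
    have hlenm : 4 ≤ (w.map homF).length := by rwa [Walk.length_map]
    obtain ⟨cx, hcx, cy, hcy, hadj, hne⟩ := hch _ (w.map homF) hwm hlenm
    rw [Walk.support_map] at hcx hcy
    obtain ⟨p', hp', rfl⟩ := List.mem_map.mp hcx
    obtain ⟨q', hq', rfl⟩ := List.mem_map.mp hcy
    refine ⟨p', hp', q', hq', hadj, fun hmem => hne ?_⟩
    rw [Walk.edges_map]
    exact List.mem_map_of_mem hmem
  -- Ω_i is a maximal clique of F'
  have hmaxF' : IsMaxClique F' (Sigma.mk i ⁻¹' Ω) := by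
    constructor
    · intro p hp q hq hpq
      exact hclique hp hq (fun h => hpq (hinj h))
    · intro t ht hsub
      have hTcl : H'.IsClique (Ω ∪ Sigma.mk i '' t) := by
        intro u hu v hv huv
        rcases hu with huΩ | ⟨pu, hpu, rfl⟩ <;> rcases hv with hvΩ | ⟨pv, hpv, rfl⟩
        · exact hclique huΩ hvΩ huv
        · by_cases hu1 : u.1 = i
          · obtain ⟨pu', rfl⟩ := Aux.sigma_eq_mk hu1
            exact ht (hsub huΩ) hpv (fun h => huv (congrArg (Sigma.mk i) h))
          · exact hle (hadj_cross hu1 rfl (hclaimB u huΩ hu1))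
        · by_cases hv1 : v.1 = i
          · obtain ⟨pv', rfl⟩ := Aux.sigma_eq_mk hv1
            exact ht hpu (hsub hvΩ) (fun h => huv (congrArg (Sigma.mk i) h))
          · exact (hle (hadj_cross hv1 rfl (hclaimB v hvΩ hv1))).symm
        · exact ht hpu hpv (fun h => huv (congrArg _ h))
      have hTeq := hmax _ hTcl Set.subset_union_left
      refine Set.Subset.antisymm ?_ hsub
      intro p hp
      have : (⟨i, p⟩ : Σ j, V j) ∈ Ω ∪ Sigma.mk i '' t :=
        Set.mem_union_right _ ⟨p, hp, rfl⟩
      rw [hTeq] at this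
      exact this
  -- minimality of F'
  have hF'min : ∀ Fm : SimpleGraph (V i), M i ≤ Fm → Fm < F' → ¬IsChordalG Fm := by
    intro Fm hMFm hFmlt hFmch
    set K2 : SimpleGraph (Σ j, V j) :=
      { Adj := fun a b => (∃ p q : V i, a = ⟨i, p⟩ ∧ b = ⟨i, q⟩ ∧ Fm.Adj p q) ∨
          (a.1 ≠ i ∧ b.1 ≠ i ∧ H'.Adj a b) ∨
          (((a.1 = i ∧ b.1 ≠ i) ∨ (a.1 ≠ i ∧ b.1 = i)) ∧ H.Adj a b)
        symm := by
          constructor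
          rintro a b (⟨p, q, rfl, rfl, h⟩ | ⟨h1, h2, h3⟩ | ⟨h1 | h1, h2⟩)
          · exact Or.inl ⟨q, p, rfl, rfl, h.symm⟩
          · exact Or.inr (Or.inl ⟨h2, h1, h3.symm⟩)
          · exact Or.inr (Or.inr ⟨Or.inr ⟨h1.2, h1.1⟩, h2.symm⟩)
          · exact Or.inr (Or.inr ⟨Or.inl ⟨h1.2, h1.1⟩, h2.symm⟩)
        loopless := by
          constructor
          rintro a (⟨p, q, rfl, he, h⟩ | ⟨h1, h2, h3⟩ | ⟨h1 | h1, h2⟩)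
          · cases hinj he; exact Fm.loopless.irrefl _ h
          · exact H'.loopless.irrefl a h3
          · exact h1.2 h1.1
          · exact h1.1 h1.2 } with hK2def
    have hHK2 : H ≤ K2 := by
      intro a b hadj
      by_cases ha : a.1 = i <;> by_cases hb : b.1 = i
      · obtain ⟨pa, rfl⟩ := Aux.sigma_eq_mk ha
        obtain ⟨pb, rfl⟩ := Aux.sigma_eq_mk hb
        exact Or.inl ⟨pa, pb, rfl, rfl, hMFm ((Aux.expand_adj_same G M).mp hadj)⟩
      · exact Or.inr (Or.inr ⟨Or.inl ⟨ha, hb⟩, hadj⟩)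
      · exact Or.inr (Or.inr ⟨Or.inr ⟨ha, hb⟩, hadj⟩)
      · exact Or.inr (Or.inl ⟨ha, hb, hle hadj⟩)
    have hK2H' : K2 ≤ H' := by
      rintro a b (⟨p, q, rfl, rfl, h⟩ | ⟨_, _, h3⟩ | ⟨_, h2⟩)
      · exact hFmlt.le h
      · exact h3
      · exact hle h2
    have hK2ne : K2 ≠ H' := by
      intro heq
      apply hFmlt.not_ge
      intro p q hpq
      have hK : K2.Adj ⟨i, p⟩ ⟨i, q⟩ := by rw [heq]; exact hpq
      rcases hK with ⟨p', q', he1, he2, h⟩ | ⟨h1, _, _⟩ | ⟨(⟨_, h2⟩ | ⟨h1, _⟩), _⟩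
      · cases hinj he1; cases hinj he2; exact h
      · exact absurd rfl h1
      · exact absurd rfl h2
      · exact absurd rfl h1
    apply hmin K2 hHK2 (lt_of_le_of_ne hK2H' hK2ne)
    intro v w hw hlen
    have hNclique : ∀ {u1 u2 : Σ j, V j}, u1.1 ≠ i → u2.1 ≠ i → G.Adj u1.1 i →
        G.Adj u2.1 i → u1 ≠ u2 → K2.Adj u1 u2 := by
      intro u1 u2 h1 h2 hG1 hG2 hne
      exact Or.inr (Or.inl ⟨h1, h2,
        hclique (hclaimC u1 h1 hG1) (hclaimC u2 h2 hG2) hne⟩)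
    by_cases hall_i : ∀ u ∈ w.support, u.1 = i
    · -- case 1: the cycle lives inside the module; lift it to Fm
      have hback : ∀ ⦃p q : V i⦄, K2.Adj ⟨i, p⟩ ⟨i, q⟩ → Fm.Adj p q := by
        rintro p q (⟨p', q', he1, he2, h⟩ | ⟨h1, _, _⟩ | ⟨(⟨_, h2⟩ | ⟨h1, _⟩), _⟩)
        · cases hinj he1; cases hinj he2; exact h
        · exact absurd rfl h1
        · exact absurd rfl h2
        · exact absurd rfl h1
      let homK : Fm →g K2 := ⟨Sigma.mk i, fun {p q} h => Or.inl ⟨p, q, rfl, rfl, h⟩⟩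
      have hinjK : Function.Injective ⇑homK := hinj
      obtain ⟨pv, rfl⟩ := Aux.sigma_eq_mk (hall_i v w.start_mem_support)
      obtain ⟨w', hmap⟩ := Aux.liftWalk homK hinjK w
        (fun z' hz' => by
          obtain ⟨p, hp⟩ := Aux.sigma_eq_mk (hall_i z' hz')
          exact ⟨p, hp.symm⟩)
        hback rfl rfl
      rw [Walk.copy_rfl_rfl] at hmap
      have hw' : w'.IsCycle := by
        rw [← hmap] at hw
        exact (Walk.map_isCycle_iff_of_injective hinjK).mp hw
      have hlen' : 4 ≤ w'.length := by
        rw [← hmap, Walk.length_map] at hlen; exact hlen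
      obtain ⟨p', hp', q', hq', hadj', hne'⟩ := hFmch pv w' hw' hlen'
      refine ⟨⟨i, p'⟩, ?_, ⟨i, q'⟩, ?_, Or.inl ⟨p', q', rfl, rfl, hadj'⟩, ?_⟩
      · rw [← hmap, Walk.support_map]; exact List.mem_map_of_mem hp'
      · rw [← hmap, Walk.support_map]; exact List.mem_map_of_mem hq'
      · intro hmem
        rw [← hmap, Walk.edges_map] at hmem
        obtain ⟨e, he, heq⟩ := List.mem_map.mp hmem
        have heq2 : e = s(p', q') :=
          Sym2.map.injective hinjK (heq.trans (Sym2.map_pair_eq ⇑homK p' q').symm)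
        exact hne' (heq2 ▸ he)
    · push_neg at hall_i
      obtain ⟨bb, hbbs, hbb1⟩ := hall_i
      by_cases hexa : ∃ u ∈ w.support, u.1 = i
      · obtain ⟨aa, haas, haa1⟩ := hexa
        by_cases hallN : ∀ u ∈ w.support, u.1 ≠ i → G.Adj u.1 i
        · -- case 3a: all outside vertices see the module; dominating vertex argument
          have hbbN : G.Adj bb.1 i := hallN bb hbbs hbb1
          have hbbΩ : bb ∈ Ω := hclaimC bb hbb1 hbbN
          have hdom : ∀ u ∈ w.support, u ≠ bb → K2.Adj bb u := by
            intro u hu hneu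
            by_cases hu1 : u.1 = i
            · exact Or.inr (Or.inr ⟨Or.inr ⟨hbb1, hu1⟩, hadj_cross hbb1 hu1 hbbN⟩)
            · exact Or.inr (Or.inl ⟨hbb1, hu1,
                hclique hbbΩ (hclaimC u hu1 (hallN u hu hu1)) (fun h => hneu h.symm)⟩)
          set W' := w.rotate bb hbbs with hW'def
          have hW'cyc : W'.IsCycle := hw.rotate hbbs
          have hW'len : W'.length = w.length := by
            have h1 := (Walk.rotate_edges w bb hbbs).perm.length_eq
            rw [← Walk.length_edges W', ← Walk.length_edges w]
            exact h1
          obtain ⟨c₁, h1, rest, hW'eq⟩ := Walk.not_nil_iff.mp hW'cyc.not_nil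
          have hrestpath : rest.IsPath := by
            rw [hW'eq] at hW'cyc
            exact ((Walk.cons_isCycle_iff rest h1).mp hW'cyc).1
          have hrestlen : rest.length + 1 = W'.length := by
            rw [hW'eq, Walk.length_cons]
          have hrevnotnil : ¬rest.reverse.Nil := by
            rw [Walk.not_nil_iff_lt_length, Walk.length_reverse]
            omega
          obtain ⟨p₂, h2, q2, hreveq⟩ := Walk.not_nil_iff.mp hrevnotnil
          have hrevpath : rest.reverse.IsPath := hrestpath.reverse
          have hq2 : bb ∉ q2.support := by
            rw [hreveq] at hrevpath
            exact ((Walk.cons_isPath_iff h2 q2).mp hrevpath).2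
          have hedgechar : ∀ x, s(bb, x) ∈ W'.edges → x = c₁ ∨ x = p₂ := by
            intro x hx
            rw [hW'eq, Walk.edges_cons] at hx
            rcases List.mem_cons.mp hx with he | he
            · rcases Sym2.eq_iff.mp he with ⟨_, h⟩ | ⟨hba, _⟩
              · exact Or.inl h
              · exact absurd hba h1.ne
            · have hrev : s(bb, x) ∈ rest.reverse.edges := by
                rw [Walk.edges_reverse]; exact List.mem_reverse.mpr he
              rw [hreveq, Walk.edges_cons] at hrev
              rcases List.mem_cons.mp hrev with he2 | he2
              · rcases Sym2.eq_iff.mp he2 with ⟨_, h⟩ | ⟨hba, _⟩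
                · exact Or.inr h
                · exact absurd hba h2.ne
              · exact absurd (q2.fst_mem_support_of_mem_edges he2) hq2
          have htail_len : W'.support.tail.length = w.length := by
            have h3 := Walk.length_support W'
            have h4 : W'.support.tail.length = W'.support.length - 1 :=
              List.length_tail
            omega
          have hnds : W'.support.tail.Nodup := hW'cyc.support_nodup
          have hpick : ∃ x ∈ W'.support.tail,
              x ∉ ({bb, c₁, p₂} : Finset (Σ j, V j)) := by
            by_contra hcon
            push_neg at hcon
            have hsubf : W'.support.tail.toFinset ⊆ {bb, c₁, p₂} := by
              intro x hx; exact hcon x (List.mem_toFinset.mp hx)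
            have hcard : W'.support.tail.toFinset.card = w.length := by
              rw [List.toFinset_card_of_nodup hnds, htail_len]
            have hle3 : ({bb, c₁, p₂} : Finset (Σ j, V j)).card ≤ 3 := by
              apply le_trans (Finset.card_insert_le _ _)
              have := Finset.card_insert_le c₁ ({p₂} : Finset (Σ j, V j))
              simp only [Finset.card_singleton] at this ⊢
              omega
            have hcc := Finset.card_le_card hsubf
            omega
          obtain ⟨xh, hxh, hxhne⟩ := hpick
          simp only [Finset.mem_insert, Finset.mem_singleton, not_or] at hxhne
          have hxhw : xh ∈ w.support :=
            List.mem_of_mem_tail ((Walk.support_rotate w bb hbbs).perm.mem_iff.mp hxh)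
          refine ⟨bb, hbbs, xh, hxhw, hdom xh hxhw hxhne.1, ?_⟩
          intro hmem
          have hmem' : s(bb, xh) ∈ W'.edges :=
            (Walk.rotate_edges w bb hbbs).perm.mem_iff.mpr hmem
          rcases hedgechar xh hmem' with rfl | rfl
          · exact hxhne.2.1 rfl
          · exact hxhne.2.2 rfl
        · -- case 3b: clique-sum style argument through the neighbourhood of the module
          push_neg at hallN
          obtain ⟨rr, hrrs, hrr1, hrrG⟩ := hallN
          have hXS : ∀ ⦃u v' : Σ j, V j⦄, K2.Adj u v' →
              u ∈ {u : Σ j, V j | u.1 = i} →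
              v' ∈ {u : Σ j, V j | u.1 = i} ∨
                v' ∈ {u : Σ j, V j | u.1 ≠ i ∧ G.Adj u.1 i} := by
            rintro u v' (⟨p, q, rfl, rfl, h⟩ | ⟨h1, _, _⟩ |
              ⟨(⟨hu, hv⟩ | ⟨hu, hv⟩), hH⟩) hui
            · exact Or.inl rfl
            · exact absurd hui h1
            · refine Or.inr ⟨hv, ?_⟩
              have hg := (Aux.expand_adj_cross G M
                (show u.1 ≠ v'.1 by rw [hui]; exact fun hh => hv hh.symm)).mp hH
              rw [hui] at hg
              exact hg.symm
            · exact absurd hui hu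
          have hRS : ∀ ⦃u v' : Σ j, V j⦄, K2.Adj u v' →
              u ∈ {u : Σ j, V j | u.1 ≠ i ∧ ¬G.Adj u.1 i} →
              v' ∈ {u : Σ j, V j | u.1 ≠ i ∧ ¬G.Adj u.1 i} ∨
                v' ∈ {u : Σ j, V j | u.1 ≠ i ∧ G.Adj u.1 i} := by
            rintro u v' (⟨p, q, rfl, rfl, h⟩ | ⟨h1, h2, _⟩ |
              ⟨(⟨hu, hv⟩ | ⟨hu, hv⟩), hH⟩) hui
            · exact absurd rfl hui.1
            · by_cases hg : G.Adj v'.1 i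
              · exact Or.inr ⟨h2, hg⟩
              · exact Or.inl ⟨h2, hg⟩
            · exact absurd hu hui.1
            · exact absurd (hcross_adj hu hv hH) hui.2
          obtain ⟨s1, h1, s2, h2, hS1, hS2, hne, hnedge⟩ :=
            Aux.arc (X := {u : Σ j, V j | u.1 = i})
              (S := {u : Σ j, V j | u.1 ≠ i ∧ G.Adj u.1 i})
              (R := {u : Σ j, V j | u.1 ≠ i ∧ ¬G.Adj u.1 i}) w hw hXS hRS
              (fun x hx hs => hs.1 hx) (fun x hx hs => hx.2 hs.2)
              (fun x hx hr => hr.1 hx) haas hrrs haa1 ⟨hrr1, hrrG⟩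
          exact ⟨s1, h1, s2, h2, hNclique hS1.1 hS2.1 hS1.2 hS2.2 hne, hnedge⟩
      · -- case 2: the cycle avoids the module entirely
        push_neg at hexa
        have hwt : (Aux.walkLe hK2H' w).IsCycle := Aux.isCycle_walkLe hK2H' hw
        have hlent : 4 ≤ (Aux.walkLe hK2H' w).length := by rwa [Aux.length_walkLe]
        obtain ⟨cx, hcx, cy, hcy, hadj, hne⟩ := hch v (Aux.walkLe hK2H' w) hwt hlent
        rw [Aux.support_walkLe] at hcx hcy
        rw [Aux.edges_walkLe] at hne
        exact ⟨cx, hcx, cy, hcy, Or.inr (Or.inl ⟨hexa cx hcx, hexa cy hcy, hadj⟩), hne⟩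
  exact ⟨F', ⟨hMF', hF'ch, hF'min⟩, hmaxF'⟩
end
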